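/- arXiv:1710.07765 — 11 statements merged into one kernel-verified Lean document; each statement's English description precedes it below -/
import Mathlib

section
/- Let G₁ and G₂ be finite abelian groups and let F : G₁ → G₂ be any function. Then Σ_χ Σ_ψ |F̂(χ,ψ)|⁴ = |G₁|·|G₂|·Σ_{a ∈ G₁} Σ_{b ∈ G₂} δ_F(a,b)², where the outer sums run over all additive characters χ of G₁ and all additive characters ψ of G₂. -/
open Finset

/-- `δ_F(a,b) = |{x : F(x+a) - F(x) = b}|`. -/
def deltaF {G₁ G₂ : Type*} [AddCommGroup G₁] [Fintype G₁] [DecidableEq G₁]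
    [AddCommGroup G₂] [DecidableEq G₂] (F : G₁ → G₂) (a : G₁) (b : G₂) : ℕ :=
  (univ.filter fun x => F (x + a) - F x = b).card

/-- The Fourier transform `F̂(χ,ψ) = Σ_x ψ(F(x))·conj(χ(x))`. -/
noncomputable def fourierF {G₁ G₂ : Type*} [AddCommGroup G₁] [Fintype G₁]
    [AddCommGroup G₂] (F : G₁ → G₂) (χ : AddChar G₁ ℂ) (ψ : AddChar G₂ ℂ) : ℂ :=
  ∑ x : G₁, ψ (F x) * (starRingEnd ℂ) (χ x)

lemma abs_pow_four_eq (z : ℂ) :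
    ((‖z‖ : ℂ)) ^ 4 = (z * (starRingEnd ℂ) z) ^ 2 := by
  rw [Complex.mul_conj]
  rw [show ((‖z‖ : ℂ)) ^ 4 = (((‖z‖ ^ 2 : ℝ)) : ℂ) ^ 2 by push_cast; ring]
  rw [Complex.sq_norm]

theorem fourth_moment_fourier_eq {G₁ G₂ : Type*}
    [AddCommGroup G₁] [Fintype G₁] [DecidableEq G₁]
    [AddCommGroup G₂] [Fintype G₂] [DecidableEq G₂] (F : G₁ → G₂) :
    ∑ χ : AddChar G₁ ℂ, ∑ ψ : AddChar G₂ ℂ, ‖fourierF F χ ψ‖ ^ 4 =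
      (Fintype.card G₁ : ℝ) * (Fintype.card G₂ : ℝ) *
        ∑ a : G₁, ∑ b : G₂, (deltaF F a b : ℝ) ^ 2 := by
  classical
  rw [← Complex.ofReal_inj]
  push_cast
  -- Step 1: |F̂|⁴ as a fourfold character sum
  have step1 : ∀ (χ : AddChar G₁ ℂ) (ψ : AddChar G₂ ℂ),
      ((‖fourierF F χ ψ‖ : ℂ)) ^ 4 =
      ∑ p : (G₁ × G₁) × (G₁ × G₁),
        ψ ((F p.1.1 - F p.1.2) + (F p.2.1 - F p.2.2)) *
          χ ((p.1.2 - p.1.1) + (p.2.2 - p.2.1)) := by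
    intro χ ψ
    rw [abs_pow_four_eq]
    have h1 : fourierF F χ ψ * (starRingEnd ℂ) (fourierF F χ ψ) =
        ∑ q : G₁ × G₁, ψ (F q.1 - F q.2) * χ (q.2 - q.1) := by
      rw [fourierF, map_sum, Finset.sum_mul_sum]
      conv_rhs => rw [Fintype.sum_prod_type]
      refine Finset.sum_congr rfl fun x _ => Finset.sum_congr rfl fun y _ => ?_
      simp only [map_mul, Complex.conj_conj, sub_eq_add_neg, AddChar.map_add_eq_mul,
        AddChar.map_neg_eq_conj]
      ring
    rw [h1, sq, Finset.sum_mul_sum]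
    conv_rhs => rw [Fintype.sum_prod_type]
    refine Finset.sum_congr rfl fun q _ => Finset.sum_congr rfl fun r _ => ?_
    simp only [AddChar.map_add_eq_mul]
    ring
  simp only [step1]
  -- Step 2: swap sums and use orthogonality
  have step2 : (∑ χ : AddChar G₁ ℂ, ∑ ψ : AddChar G₂ ℂ,
      ∑ p : (G₁ × G₁) × (G₁ × G₁),
        ψ ((F p.1.1 - F p.1.2) + (F p.2.1 - F p.2.2)) *
          χ ((p.1.2 - p.1.1) + (p.2.2 - p.2.1))) =
      ∑ p : (G₁ × G₁) × (G₁ × G₁),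
        (if (p.1.2 - p.1.1) + (p.2.2 - p.2.1) = 0 then (Fintype.card G₁ : ℂ) else 0) *
          (if (F p.1.1 - F p.1.2) + (F p.2.1 - F p.2.2) = 0 then (Fintype.card G₂ : ℂ) else 0) := by
    calc (∑ χ : AddChar G₁ ℂ, ∑ ψ : AddChar G₂ ℂ,
        ∑ p : (G₁ × G₁) × (G₁ × G₁),
          ψ ((F p.1.1 - F p.1.2) + (F p.2.1 - F p.2.2)) *
            χ ((p.1.2 - p.1.1) + (p.2.2 - p.2.1)))
        = ∑ χ : AddChar G₁ ℂ, ∑ p : (G₁ × G₁) × (G₁ × G₁), ∑ ψ : AddChar G₂ ℂ,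
            ψ ((F p.1.1 - F p.1.2) + (F p.2.1 - F p.2.2)) *
              χ ((p.1.2 - p.1.1) + (p.2.2 - p.2.1)) :=
          Finset.sum_congr rfl fun χ _ => Finset.sum_comm
      _ = ∑ p : (G₁ × G₁) × (G₁ × G₁), ∑ χ : AddChar G₁ ℂ, ∑ ψ : AddChar G₂ ℂ,
            ψ ((F p.1.1 - F p.1.2) + (F p.2.1 - F p.2.2)) *
              χ ((p.1.2 - p.1.1) + (p.2.2 - p.2.1)) := Finset.sum_comm
      _ = _ := by
          refine Finset.sum_congr rfl fun p _ => ?_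
          rw [← AddChar.sum_apply_eq_ite, ← AddChar.sum_apply_eq_ite, Finset.sum_mul_sum]
          exact Finset.sum_congr rfl fun χ _ => Finset.sum_congr rfl fun ψ _ => by ring
  rw [step2]
  -- Step 3: collapse the last variable using the linear constraint
  have step3 : (∑ p : (G₁ × G₁) × (G₁ × G₁),
      (if (p.1.2 - p.1.1) + (p.2.2 - p.2.1) = 0 then (Fintype.card G₁ : ℂ) else 0) *
        (if (F p.1.1 - F p.1.2) + (F p.2.1 - F p.2.2) = 0 then (Fintype.card G₂ : ℂ) else 0)) =
      ∑ t : (G₁ × G₁) × G₁,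
        if (F t.1.1 - F t.1.2) + (F t.2 - F (t.2 + t.1.1 - t.1.2)) = 0
          then (Fintype.card G₁ : ℂ) * (Fintype.card G₂ : ℂ) else 0 := by
    simp only [Fintype.sum_prod_type]
    refine Finset.sum_congr rfl fun x _ => Finset.sum_congr rfl fun y _ =>
      Finset.sum_congr rfl fun u _ => ?_
    have hrw : ∀ v : G₁, (y - x) + (v - u) = v - (u + x - y) := fun v => by abel
    simp only [hrw, sub_eq_zero, ite_mul, zero_mul]
    rw [Finset.sum_ite_eq' univ (u + x - y)
      (fun v => (Fintype.card G₁ : ℂ) *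
        if (F x - F y) + (F u - F v) = 0 then (Fintype.card G₂ : ℂ) else 0)]
    simp [mul_ite, mul_zero]
  rw [step3]
  -- Step 4: rewrite the δ side as a sum over triples
  have step4 : (∑ a : G₁, ∑ b : G₂, ((deltaF F a b : ℂ)) ^ 2) =
      ∑ t : G₁ × G₁ × G₁,
        if F (t.2.1 + t.1) - F t.2.1 = F (t.2.2 + t.1) - F t.2.2 then (1 : ℂ) else 0 := by
    simp only [Fintype.sum_prod_type]
    refine Finset.sum_congr rfl fun a _ => ?_
    have hδ : ∀ b, ((deltaF F a b : ℂ)) =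
        ∑ x : G₁, if F (x + a) - F x = b then (1 : ℂ) else 0 := by
      intro b
      rw [deltaF, Finset.card_filter]
      push_cast
      exact Finset.sum_congr rfl fun x _ => by split <;> simp
    calc (∑ b : G₂, ((deltaF F a b : ℂ)) ^ 2)
        = ∑ b : G₂, ∑ x : G₁, ∑ y : G₁,
            (if F (x + a) - F x = b then (1 : ℂ) else 0) *
              (if F (y + a) - F y = b then (1 : ℂ) else 0) := by
          refine Finset.sum_congr rfl fun b _ => ?_
          rw [hδ, sq, Finset.sum_mul_sum]
      _ = ∑ x : G₁, ∑ y : G₁, ∑ b : G₂,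
            (if F (x + a) - F x = b then (1 : ℂ) else 0) *
              (if F (y + a) - F y = b then (1 : ℂ) else 0) := by
          rw [Finset.sum_comm]
          exact Finset.sum_congr rfl fun x _ => Finset.sum_comm
      _ = ∑ x : G₁, ∑ y : G₁,
            if F (x + a) - F x = F (y + a) - F y then (1 : ℂ) else 0 := by
          refine Finset.sum_congr rfl fun x _ => Finset.sum_congr rfl fun y _ => ?_
          simp only [ite_mul, one_mul, zero_mul]
          rw [Finset.sum_ite_eq univ (F (x + a) - F x)
            (fun b => if F (y + a) - F y = b then (1 : ℂ) else 0)]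
          simp [eq_comm]
  rw [step4, Finset.mul_sum]
  simp only [mul_ite, mul_one, mul_zero]
  -- Step 5: the bijection between the two triple sums
  refine Eq.symm (Fintype.sum_equiv
    (⟨fun t => ((t.2.1 + t.1, t.2.1), t.2.2), fun t => (t.1.1 - t.1.2, t.1.2, t.2),
      fun t => by simp, fun t => by simp⟩ : G₁ × G₁ × G₁ ≃ (G₁ × G₁) × G₁) _ _ fun t => ?_)
  obtain ⟨a, x, y⟩ := t
  simp only [Equiv.coe_fn_mk]
  have h1 : y + (x + a) - x = y + a := by abel
  simp only [h1]
  have h2 : (F (x + a) - F x) + (F y - F (y + a)) =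
      (F (x + a) - F x) - (F (y + a) - F y) := by abel
  simp only [h2, sub_eq_zero]
end

section
/- Let G₁ and G₂ be finite abelian groups with |G₂| ≥ 2, and let F : G₁ → G₂ be any function. Then there exist an additive character χ of G₁ and a nontrivial additive character ψ of G₂ such that |F̂(χ,ψ)|² ≥ |G₁| + |G₂|·NB_F/(|G₁|·(|G₂| − 1)), where NB_F is the derivative imbalance of F (equivalently, the nonlinearity 𝒩ℒ(F) = (|G₁| − max_{χ, ψ≠1}|F̂(χ,ψ)|)/|G₂| satisfies 𝒩ℒ(F) ≤ |G₁|/|G₂| − (1/|G₂|)·√(|G₁| + |G₂|·NB_F/(|G₁|(|G₂|−1)))). -/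
open Finset ComplexConjugate

/-- The derivative imbalance `NB_F = Σ_{a ≠ 0} Σ_b δ_F(a,b)² − (|G₁|−1)·|G₁|²/|G₂|`. -/
def NB {G₁ G₂ : Type*} [AddCommGroup G₁] [Fintype G₁] [DecidableEq G₁]
    [AddCommGroup G₂] [Fintype G₂] [DecidableEq G₂] (F : G₁ → G₂) : ℚ :=
  (∑ a ∈ univ.filter (fun a : G₁ => a ≠ 0), ∑ b : G₂, (deltaF F a b : ℚ) ^ 2)
    - ((Fintype.card G₁ : ℚ) - 1) * (Fintype.card G₁ : ℚ) ^ 2 / (Fintype.card G₂ : ℚ)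

section main
variable {G₁ G₂ : Type*} [AddCommGroup G₁] [Fintype G₁] [DecidableEq G₁]
    [AddCommGroup G₂] [Fintype G₂] [DecidableEq G₂] (F : G₁ → G₂)

lemma stepA (χ : AddChar G₁ ℂ) (ψ : AddChar G₂ ℂ) :
    fourierF F χ ψ * conj (fourierF F χ ψ)
      = ∑ a : G₁, (∑ x : G₁, ψ (F x - F (x + a))) * χ a := by
  unfold fourierF
  rw [map_sum, Finset.sum_mul_sum]
  have h : ∀ x : G₁, ∑ y : G₁, (ψ (F x) * conj (χ x)) * conj (ψ (F y) * conj (χ y))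
      = ∑ a : G₁, ψ (F x - F (x + a)) * χ a := by
    intro x
    rw [← Equiv.sum_comp (Equiv.addLeft x)
      (fun y => (ψ (F x) * conj (χ x)) * conj (ψ (F y) * conj (χ y)))]
    refine Finset.sum_congr rfl fun a _ => ?_
    simp only [Equiv.coe_addLeft]
    rw [map_mul, Complex.conj_conj, ← AddChar.map_neg_eq_conj χ, ← AddChar.map_neg_eq_conj ψ,
      mul_mul_mul_comm, ← AddChar.map_add_eq_mul, ← AddChar.map_add_eq_mul, neg_add_cancel_left,
      ← sub_eq_add_neg]
  simp_rw [h]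
  rw [Finset.sum_comm]
  exact Finset.sum_congr rfl fun a _ => (Finset.sum_mul _ _ _).symm
end main

section main2
set_option linter.unusedSectionVars false
variable {G₁ G₂ : Type*} [AddCommGroup G₁] [Fintype G₁] [DecidableEq G₁]
    [AddCommGroup G₂] [Fintype G₂] [DecidableEq G₂] (F : G₁ → G₂)

lemma parsevalP2 {G : Type*} [AddCommGroup G] [Fintype G] [DecidableEq G] (c : G → ℂ) :
    ∑ χ : AddChar G ℂ, (∑ a, c a * χ a) * conj (∑ b, c b * χ b)
      = (Fintype.card G : ℂ) * ∑ a, c a * conj (c a) := by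
  have h : ∀ χ : AddChar G ℂ, (∑ a, c a * χ a) * conj (∑ b, c b * χ b)
      = ∑ a, ∑ b, (c a * conj (c b)) * χ (a - b) := by
    intro χ
    rw [map_sum, Finset.sum_mul_sum]
    refine Finset.sum_congr rfl fun a _ => Finset.sum_congr rfl fun b _ => ?_
    rw [sub_eq_add_neg, AddChar.map_add_eq_mul, AddChar.map_neg_eq_conj, map_mul]
    ring
  simp_rw [h]
  have swap : (∑ χ : AddChar G ℂ, ∑ a : G, ∑ b : G, (c a * conj (c b)) * χ (a - b))
      = ∑ a : G, ∑ b : G, ∑ χ : AddChar G ℂ, (c a * conj (c b)) * χ (a - b) := by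
    rw [Finset.sum_comm]
    exact Finset.sum_congr rfl fun a _ => Finset.sum_comm
  rw [swap]
  simp_rw [← Finset.mul_sum, AddChar.sum_apply_eq_ite, sub_eq_zero, mul_ite, mul_zero,
    Finset.sum_ite_eq, Finset.mem_univ, if_true]
  rw [Finset.mul_sum]
  exact Finset.sum_congr rfl fun a _ => by ring

lemma parsevalP2' {G : Type*} [AddCommGroup G] [Fintype G] [DecidableEq G] (c : G → ℂ) :
    ∑ χ : AddChar G ℂ, (∑ a, c a * conj (χ a)) * conj (∑ b, c b * conj (χ b))
      = (Fintype.card G : ℂ) * ∑ a, c a * conj (c a) := by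
  have h : ∀ χ : AddChar G ℂ, (∑ a, c a * conj (χ a)) * conj (∑ b, c b * conj (χ b))
      = ∑ a, ∑ b, (c a * conj (c b)) * χ (b - a) := by
    intro χ
    rw [map_sum, Finset.sum_mul_sum]
    refine Finset.sum_congr rfl fun a _ => Finset.sum_congr rfl fun b _ => ?_
    rw [sub_eq_add_neg, AddChar.map_add_eq_mul, AddChar.map_neg_eq_conj, map_mul,
      Complex.conj_conj]
    ring
  simp_rw [h]
  have swap : (∑ χ : AddChar G ℂ, ∑ a : G, ∑ b : G, (c a * conj (c b)) * χ (b - a))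
      = ∑ a : G, ∑ b : G, ∑ χ : AddChar G ℂ, (c a * conj (c b)) * χ (b - a) := by
    rw [Finset.sum_comm]
    exact Finset.sum_congr rfl fun a _ => Finset.sum_comm
  rw [swap]
  simp_rw [← Finset.mul_sum, AddChar.sum_apply_eq_ite, sub_eq_zero, mul_ite, mul_zero,
    Finset.sum_ite_eq', Finset.mem_univ, if_true]
  rw [Finset.mul_sum]
  exact Finset.sum_congr rfl fun a _ => by ring

lemma key2 (ψ : AddChar G₂ ℂ) :
    ∑ χ : AddChar G₁ ℂ, fourierF F χ ψ * conj (fourierF F χ ψ)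
      = (Fintype.card G₁ : ℂ) ^ 2 := by
  have h := parsevalP2' (fun x : G₁ => ψ (F x))
  unfold fourierF
  rw [h]
  have : ∀ x : G₁, ψ (F x) * conj (ψ (F x)) = 1 := by
    intro x
    rw [← AddChar.map_neg_eq_conj, ← AddChar.map_add_eq_mul, add_neg_cancel,
      AddChar.map_zero_eq_one]
  simp_rw [this, Finset.sum_const, card_univ, nsmul_eq_mul, mul_one, sq]

lemma key4 (ψ : AddChar G₂ ℂ) :
    ∑ χ : AddChar G₁ ℂ, (fourierF F χ ψ * conj (fourierF F χ ψ)) ^ 2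
      = (Fintype.card G₁ : ℂ) *
          ∑ a : G₁, (∑ x : G₁, ψ (F x - F (x + a))) * conj (∑ z : G₁, ψ (F z - F (z + a))) := by
  have hself : ∀ χ : AddChar G₁ ℂ,
      (fourierF F χ ψ * conj (fourierF F χ ψ)) ^ 2
        = (∑ a : G₁, (∑ x : G₁, ψ (F x - F (x + a))) * χ a)
            * conj (∑ b : G₁, (∑ x : G₁, ψ (F x - F (x + b))) * χ b) := by
    intro χ
    have hc : conj (fourierF F χ ψ * conj (fourierF F χ ψ))
        = fourierF F χ ψ * conj (fourierF F χ ψ) := by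
      rw [map_mul, Complex.conj_conj, mul_comm]
    calc (fourierF F χ ψ * conj (fourierF F χ ψ)) ^ 2
        = (fourierF F χ ψ * conj (fourierF F χ ψ))
            * conj (fourierF F χ ψ * conj (fourierF F χ ψ)) := by rw [hc, sq]
      _ = _ := by rw [stepA F χ ψ]
  simp_rw [hself]
  exact parsevalP2 _

lemma key5 (a : G₁) :
    ∑ ψ : AddChar G₂ ℂ, (∑ x : G₁, ψ (F x - F (x + a))) * conj (∑ z : G₁, ψ (F z - F (z + a)))
      = (Fintype.card G₂ : ℂ) *
          ∑ x : G₁, ∑ z : G₁, (if F (x + a) - F x = F (z + a) - F z then 1 else 0) := by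
  have h : ∀ ψ : AddChar G₂ ℂ,
      (∑ x : G₁, ψ (F x - F (x + a))) * conj (∑ z : G₁, ψ (F z - F (z + a)))
        = ∑ x : G₁, ∑ z : G₁, ψ ((F x - F (x + a)) + (F (z + a) - F z)) := by
    intro ψ
    rw [map_sum, Finset.sum_mul_sum]
    refine Finset.sum_congr rfl fun x _ => Finset.sum_congr rfl fun z _ => ?_
    rw [AddChar.map_add_eq_mul, ← AddChar.map_neg_eq_conj, neg_sub]
  simp_rw [h]
  have swap : (∑ ψ : AddChar G₂ ℂ, ∑ x : G₁, ∑ z : G₁, ψ ((F x - F (x + a)) + (F (z + a) - F z)))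
      = ∑ x : G₁, ∑ z : G₁, ∑ ψ : AddChar G₂ ℂ, ψ ((F x - F (x + a)) + (F (z + a) - F z)) := by
    rw [Finset.sum_comm]
    exact Finset.sum_congr rfl fun x _ => Finset.sum_comm
  rw [swap, Finset.mul_sum]
  refine Finset.sum_congr rfl fun x _ => ?_
  rw [Finset.mul_sum]
  refine Finset.sum_congr rfl fun z _ => ?_
  rw [AddChar.sum_apply_eq_ite]
  have hiff : (F x - F (x + a) + (F (z + a) - F z) = 0) ↔ (F (x + a) - F x = F (z + a) - F z) := by
    rw [add_eq_zero_iff_neg_eq, neg_sub]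
  rw [if_congr hiff rfl rfl]
  split_ifs <;> simp

end main2

section main3
set_option linter.unusedSectionVars false
variable {G₁ G₂ : Type*} [AddCommGroup G₁] [Fintype G₁] [DecidableEq G₁]
    [AddCommGroup G₂] [Fintype G₂] [DecidableEq G₂] (F : G₁ → G₂)

lemma key_triv :
    ∑ χ : AddChar G₁ ℂ, (fourierF F χ 1 * conj (fourierF F χ 1)) ^ 2
      = (Fintype.card G₁ : ℂ) ^ 4 := by
  classical
  have h : ∀ χ : AddChar G₁ ℂ, fourierF F χ 1
      = conj (if χ = 0 then (Fintype.card G₁ : ℂ) else 0) := by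
    intro χ
    unfold fourierF
    simp only [AddChar.one_apply, one_mul, ← map_sum]
    rw [AddChar.sum_eq_ite]
  simp_rw [h]
  have h2 : ∀ χ : AddChar G₁ ℂ,
      (conj (if χ = 0 then (Fintype.card G₁ : ℂ) else 0)
        * conj (conj (if χ = 0 then (Fintype.card G₁ : ℂ) else 0))) ^ 2
      = (if χ = 0 then (Fintype.card G₁ : ℂ) ^ 4 else 0) := by
    intro χ
    split_ifs with hχ <;> simp <;> ring
  simp_rw [h2]
  rw [Finset.sum_ite_eq' univ (0 : AddChar G₁ ℂ) (fun _ => (Fintype.card G₁ : ℂ) ^ 4)]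
  simp

lemma delta_sum (a : G₁) :
    ∑ b : G₂, (deltaF F a b : ℂ) ^ 2
      = ∑ x : G₁, ∑ z : G₁, (if F (x + a) - F x = F (z + a) - F z then 1 else 0) := by
  have hd : ∀ b : G₂, (deltaF F a b : ℂ) = ∑ x : G₁, (if F (x + a) - F x = b then 1 else 0) := by
    intro b
    rw [deltaF, Finset.card_filter]
    push_cast
    rfl
  simp_rw [hd, sq, Finset.sum_mul_sum]
  have swap : (∑ b : G₂, ∑ x : G₁, ∑ z : G₁,
        (if F (x + a) - F x = b then (1:ℂ) else 0) * (if F (z + a) - F z = b then 1 else 0))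
      = ∑ x : G₁, ∑ z : G₁, ∑ b : G₂,
        (if F (x + a) - F x = b then (1:ℂ) else 0) * (if F (z + a) - F z = b then 1 else 0) := by
    rw [Finset.sum_comm]
    exact Finset.sum_congr rfl fun x _ => Finset.sum_comm
  rw [swap]
  refine Finset.sum_congr rfl fun x _ => Finset.sum_congr rfl fun z _ => ?_
  simp_rw [ite_mul, one_mul, zero_mul, Finset.sum_ite_eq, Finset.mem_univ, if_true]
  exact if_congr eq_comm rfl rfl

lemma delta_zero :
    ∑ b : G₂, (deltaF F 0 b : ℂ) ^ 2 = (Fintype.card G₁ : ℂ) ^ 2 := by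
  have hd : ∀ b : G₂, (deltaF F 0 b : ℂ) = if b = 0 then (Fintype.card G₁ : ℂ) else 0 := by
    intro b
    rw [deltaF]
    split_ifs with hb
    · subst hb
      rw [show (univ.filter fun x : G₁ => F (x + 0) - F x = 0) = univ from by
        simp [Finset.filter_eq_self]]
      simp
    · rw [show (univ.filter fun x : G₁ => F (x + 0) - F x = b) = ∅ from by
        ext x; simp [show (0:G₂) ≠ b from Ne.symm hb]]
      simp
  simp_rw [hd]
  have h2 : ∀ b : G₂, (if b = 0 then (Fintype.card G₁ : ℂ) else 0) ^ 2
      = if b = 0 then (Fintype.card G₁ : ℂ) ^ 2 else 0 := by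
    intro b; split_ifs <;> simp
  simp_rw [h2]
  rw [Finset.sum_ite_eq' univ (0 : G₂) (fun _ => (Fintype.card G₁ : ℂ) ^ 2)]
  simp
end main3

section main4
set_option linter.unusedSectionVars false
variable {G₁ G₂ : Type*} [AddCommGroup G₁] [Fintype G₁] [DecidableEq G₁]
    [AddCommGroup G₂] [Fintype G₂] [DecidableEq G₂] (F : G₁ → G₂)

lemma bigC :
    ∑ ψ ∈ (univ : Finset (AddChar G₂ ℂ)).erase 1,
        ∑ χ : AddChar G₁ ℂ, (fourierF F χ ψ * conj (fourierF F χ ψ)) ^ 2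
      = (Fintype.card G₁ : ℂ) * (Fintype.card G₂ : ℂ) *
          (∑ a : G₁, ∑ b : G₂, (deltaF F a b : ℂ) ^ 2) - (Fintype.card G₁ : ℂ) ^ 4 := by
  have hall : ∑ ψ : AddChar G₂ ℂ, ∑ χ : AddChar G₁ ℂ,
        (fourierF F χ ψ * conj (fourierF F χ ψ)) ^ 2
      = (Fintype.card G₁ : ℂ) * (Fintype.card G₂ : ℂ) *
          (∑ a : G₁, ∑ b : G₂, (deltaF F a b : ℂ) ^ 2) := by
    simp_rw [key4 F]
    rw [← Finset.mul_sum, Finset.sum_comm]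
    have : ∀ a : G₁, ∑ ψ : AddChar G₂ ℂ,
        (∑ x : G₁, ψ (F x - F (x + a))) * conj (∑ z : G₁, ψ (F z - F (z + a)))
        = (Fintype.card G₂ : ℂ) * ∑ b : G₂, (deltaF F a b : ℂ) ^ 2 := by
      intro a
      rw [key5 F a, delta_sum F a]
    simp_rw [this]
    rw [← Finset.mul_sum]
    ring
  rw [← Finset.add_sum_erase univ _ (Finset.mem_univ (1 : AddChar G₂ ℂ))] at hall
  rw [key_triv F] at hall
  linear_combination hall
end main4

theorem exists_large_fourier_coefficient {G₁ G₂ : Type*}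
    [AddCommGroup G₁] [Fintype G₁] [DecidableEq G₁]
    [AddCommGroup G₂] [Fintype G₂] [DecidableEq G₂]
    (h₂ : 2 ≤ Fintype.card G₂) (F : G₁ → G₂) :
    ∃ (χ : AddChar G₁ ℂ) (ψ : AddChar G₂ ℂ), ψ ≠ 1 ∧
      (Fintype.card G₁ : ℝ) +
          (Fintype.card G₂ : ℝ) * (NB F : ℝ) /
            ((Fintype.card G₁ : ℝ) * ((Fintype.card G₂ : ℝ) - 1)) ≤
        ‖fourierF F χ ψ‖ ^ 2 := by
  classical
  set K₁ : ℝ := (Fintype.card G₁ : ℝ) with hK₁def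
  set K₂ : ℝ := (Fintype.card G₂ : ℝ) with hK₂def
  have hK₁pos : (0:ℝ) < K₁ := by rw [hK₁def]; exact_mod_cast (Fintype.card_pos (α := G₁))
  have hK₂two : (2:ℝ) ≤ K₂ := by rw [hK₂def]; exact_mod_cast h₂
  -- a nontrivial character of G₂
  obtain ⟨a₀, ha₀⟩ := Fintype.exists_ne_of_one_lt_card (by omega) (0 : G₂)
  obtain ⟨ψ₀, hψ₀⟩ := AddChar.exists_apply_ne_zero.2 ha₀
  have hψ₀1 : ψ₀ ≠ 1 := by
    intro h; apply hψ₀; rw [h]; simp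
  -- maximal Fourier coefficient over pairs with ψ ≠ 1
  set P : Finset (AddChar G₂ ℂ × AddChar G₁ ℂ) :=
    ((univ : Finset (AddChar G₂ ℂ)).erase 1) ×ˢ univ with hPdef
  have hPne : P.Nonempty := ⟨(ψ₀, 1), by
    simp [hPdef, Finset.mem_product, Finset.mem_erase, hψ₀1]⟩
  obtain ⟨p, hp, hmax⟩ := Finset.exists_max_image P
    (fun q => Complex.normSq (fourierF F q.2 q.1)) hPne
  set M : ℝ := Complex.normSq (fourierF F p.2 p.1) with hMdef
  -- the second-moment sum
  have h2R : ∀ ψ : AddChar G₂ ℂ,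
      ∑ χ : AddChar G₁ ℂ, Complex.normSq (fourierF F χ ψ) = K₁ ^ 2 := by
    intro ψ
    have h := key2 F ψ
    simp_rw [Complex.mul_conj] at h
    rw [hK₁def]
    exact_mod_cast h
  have hD : ∑ q ∈ P, Complex.normSq (fourierF F q.2 q.1) = (K₂ - 1) * K₁ ^ 2 := by
    rw [hPdef, Finset.sum_product]
    simp_rw [h2R]
    rw [Finset.sum_const, Finset.card_erase_of_mem (Finset.mem_univ _), Finset.card_univ,
      AddChar.card_eq, nsmul_eq_mul]
    rw [Nat.cast_sub (by omega)]
    simp [hK₂def]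
  -- the fourth-moment sum
  set S : ℝ := ∑ a ∈ univ.filter (fun a : G₁ => a ≠ 0), ∑ b : G₂, (deltaF F a b : ℝ) ^ 2
    with hSdef
  have hsplit : ∑ a : G₁, ∑ b : G₂, (deltaF F a b : ℝ) ^ 2 = K₁ ^ 2 + S := by
    rw [← Finset.add_sum_erase univ _ (Finset.mem_univ (0 : G₁))]
    have hz : ∑ b : G₂, (deltaF F 0 b : ℝ) ^ 2 = K₁ ^ 2 := by
      have := delta_zero F
      rw [hK₁def]
      exact_mod_cast this
    rw [hz, hSdef, Finset.filter_ne']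
  have hQ : ∑ q ∈ P, (Complex.normSq (fourierF F q.2 q.1)) ^ 2
      = K₁ * K₂ * (K₁ ^ 2 + S) - K₁ ^ 4 := by
    have h := bigC F
    simp_rw [Complex.mul_conj] at h
    rw [← hsplit]
    rw [hPdef, Finset.sum_product, hK₁def, hK₂def]
    apply Complex.ofReal_injective
    push_cast
    exact_mod_cast h
  -- relate NB to S
  have hNB : (NB F : ℝ) = S - (K₁ - 1) * K₁ ^ 2 / K₂ := by
    rw [NB, hSdef]
    push_cast
    ring
  -- the target value T satisfies T * D = Q
  set T : ℝ := K₁ + K₂ * (NB F : ℝ) / (K₁ * (K₂ - 1)) with hTdef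
  have hTD : T * ((K₂ - 1) * K₁ ^ 2) = K₁ * K₂ * (K₁ ^ 2 + S) - K₁ ^ 4 := by
    rw [hTdef, hNB]
    have h1 : K₁ ≠ 0 := ne_of_gt hK₁pos
    have h2 : K₂ ≠ 0 := by linarith
    have h3 : K₂ - 1 ≠ 0 := by intro h; nlinarith
    field_simp
    ring
  -- the maximum dominates
  have hQle : ∑ q ∈ P, (Complex.normSq (fourierF F q.2 q.1)) ^ 2
      ≤ M * ∑ q ∈ P, Complex.normSq (fourierF F q.2 q.1) := by
    rw [Finset.mul_sum]
    refine Finset.sum_le_sum fun q hq => ?_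
    rw [sq]
    exact mul_le_mul_of_nonneg_right (hmax q hq) (Complex.normSq_nonneg _)
  have hDpos : (0:ℝ) < (K₂ - 1) * K₁ ^ 2 := by nlinarith
  have hTM : T ≤ M := by
    have : T * ((K₂ - 1) * K₁ ^ 2) ≤ M * ((K₂ - 1) * K₁ ^ 2) := by
      rw [hTD, ← hD, ← hQ]
      calc ∑ q ∈ P, (Complex.normSq (fourierF F q.2 q.1)) ^ 2
          ≤ M * ∑ q ∈ P, Complex.normSq (fourierF F q.2 q.1) := hQle
        _ = _ := by rw [hD, ← hD]
    exact le_of_mul_le_mul_right this hDpos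
  refine ⟨p.2, p.1, ?_, ?_⟩
  · have := (Finset.mem_product.1 (by rwa [hPdef] at hp)).1
    exact (Finset.mem_erase.1 this).1
  · rw [Complex.sq_norm]
    exact hTM
end

section
/- Let p be an odd prime, n ≥ 1, q = pⁿ, and let K be the finite field with q elements. Let i ≥ j ≥ 0 be integers, let F : K → K be the monomial function F(x) = x^(pⁱ + pʲ), and set s = gcd(i − j, n). Then Σ_{a ∈ K, a ≠ 0} Σ_{b ∈ K} δ_F(a,b)² equals q·(q − 1)·pˢ if n/s is even, and equals q·(q − 1) if n/s is odd (equivalently, NB_F = q(q−1)(pˢ − 1) in the first case and NB_F = 0, i.e. F is perfect nonlinear, in the second case). -/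
open Finset


lemma sum_sq_card_fiber {α β : Type*} [Fintype α] [DecidableEq α] [Fintype β] [DecidableEq β]
    (f : α → β) :
    ∑ b : β, (#(univ.filter fun x => f x = b)) ^ 2 =
      #((univ ×ˢ univ).filter fun z : α × α => f z.1 = f z.2) := by
  have h : ((univ ×ˢ univ).filter fun z : α × α => f z.1 = f z.2) =
      univ.biUnion (fun b => (univ.filter fun x => f x = b) ×ˢ (univ.filter fun x => f x = b)) := by
    ext z
    simp only [mem_filter, mem_product, mem_univ, true_and, mem_biUnion]
    constructor
    · intro hz; exact ⟨f z.2, hz, rfl⟩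
    · rintro ⟨b, h1, h2⟩; rw [h1, h2]
  rw [h, card_biUnion]
  · refine Finset.sum_congr rfl fun b _ => ?_
    rw [card_product, sq]
  · intro b _ b' _ hbb'
    rw [Function.onFun, Finset.disjoint_left]
    rintro z hz hz'
    simp only [mem_product, mem_filter, mem_univ, true_and] at hz hz'
    exact hbb' (hz.1 ▸ hz'.1 ▸ rfl)

lemma card_pairs_sub {K : Type*} [AddCommGroup K] [Fintype K] [DecidableEq K]
    (L : K → K) (hL : ∀ x y, L (x - y) = L x - L y) :
    #((univ ×ˢ univ).filter fun z : K × K => L z.1 = L z.2) =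
      Fintype.card K * #(univ.filter fun x => L x = 0) := by
  rw [← card_univ, ← card_product]
  apply Finset.card_nbij' (i := fun z : K × K => (z.2, z.1 - z.2))
    (j := fun w : K × K => (w.2 + w.1, w.1))
  · rintro ⟨x, y⟩ hz
    simp only [mem_coe, mem_filter, mem_product, mem_univ, true_and] at hz ⊢
    rw [hL, hz, sub_self]
  · rintro ⟨a, b⟩ hw
    simp only [mem_coe, mem_filter, mem_product, mem_univ, true_and] at hw ⊢
    have h2 := hL (b + a) b
    rw [add_sub_cancel_left, hw, sub_zero] at h2
    exact h2.symm
  · rintro ⟨x, y⟩ _; simp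
  · rintro ⟨z, y⟩ _; simp

lemma card_pow_eq_cyclic {G : Type*} [CommGroup G] [Fintype G] [DecidableEq G] [IsCyclic G]
    (m : ℕ) (c : G) :
    #(univ.filter fun v : G => v ^ m = c) =
      if c ^ (Fintype.card G / Nat.gcd m (Fintype.card G)) = 1
      then Nat.gcd m (Fintype.card G) else 0 := by
  classical
  obtain ⟨g, hg⟩ := IsCyclic.exists_generator (α := G)
  set M := Fintype.card G with hM
  have hM0 : 0 < M := Fintype.card_pos
  have hog : orderOf g = M := by
    rw [orderOf_eq_card_of_forall_mem_zpowers hg, Nat.card_eq_fintype_card]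
  set G0 := Nat.gcd m M with hG0
  have hG0M : G0 ∣ M := Nat.gcd_dvd_right m M
  have hG0m : G0 ∣ m := Nat.gcd_dvd_left m M
  have hG0pos : 0 < G0 := Nat.gcd_pos_of_pos_right m hM0
  have hG0z : (G0 : ℤ) ≠ 0 := by exact_mod_cast hG0pos.ne'
  have hMG0pos : 0 < M / G0 := Nat.div_pos (Nat.le_of_dvd hM0 hG0M) hG0pos
  have hMG0z : ((M / G0 : ℕ) : ℤ) ≠ 0 := by exact_mod_cast hMG0pos.ne'
  have hMe : (M : ℤ) = ((M / G0 : ℕ) : ℤ) * (G0 : ℤ) := by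
    exact_mod_cast (Nat.div_mul_cancel hG0M).symm
  have hvM : ∀ v : G, v ^ M = 1 := fun v => pow_card_eq_one
  -- kernel count
  have hζord : orderOf (g ^ (M / G0)) = G0 := by
    rw [orderOf_pow, hog, Nat.gcd_eq_right (Nat.div_dvd_of_dvd hG0M),
      Nat.div_div_self hG0M hM0.ne']
  have hker : #(univ.filter fun v : G => v ^ G0 = 1) = G0 := by
    have hset : (univ.filter fun v : G => v ^ G0 = 1) =
        (Subgroup.zpowers (g ^ (M / G0)) : Set G).toFinset := by
      ext v
      simp only [mem_filter, mem_univ, true_and, Set.mem_toFinset, SetLike.mem_coe,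
        Subgroup.mem_zpowers_iff]
      constructor
      · intro hv
        obtain ⟨k, hk⟩ := hg v
        have hkeq : g ^ k = v := hk
        have hk2 : g ^ (k * (G0 : ℤ)) = 1 := by
          rw [zpow_mul, zpow_natCast, hkeq, hv]
        have hdvd : ((orderOf g : ℕ) : ℤ) ∣ k * (G0 : ℤ) :=
          orderOf_dvd_iff_zpow_eq_one.mpr hk2
        rw [hog, hMe] at hdvd
        have hdvd2 : ((M / G0 : ℕ) : ℤ) ∣ k :=
          (mul_dvd_mul_iff_right hG0z).mp hdvd
        obtain ⟨t, ht⟩ := hdvd2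
        refine ⟨t, ?_⟩
        show (g ^ (M / G0)) ^ t = v
        rw [← zpow_natCast g (M / G0), ← zpow_mul, ← ht, hkeq]
      · rintro ⟨t, ht⟩
        have ht' : (g ^ (M / G0)) ^ t = v := ht
        have h5 : (g ^ (M / G0)) ^ G0 = 1 := orderOf_dvd_iff_pow_eq_one.mp (by rw [hζord])
        rw [← ht', ← zpow_natCast _ G0, ← zpow_mul, mul_comm, zpow_mul, zpow_natCast, h5, one_zpow]
    rw [hset, ← Set.ncard_eq_toFinset_card', ← Nat.card_coe_set_eq]
    exact (Nat.card_zpowers _).trans hζord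
  -- reduce exponent m to G0 in the kernel
  have hker' : (univ.filter fun v : G => v ^ m = 1) = (univ.filter fun v : G => v ^ G0 = 1) := by
    ext v
    simp only [mem_filter, mem_univ, true_and]
    constructor
    · intro h
      have hb : (G0 : ℤ) = m * Nat.gcdA m M + M * Nat.gcdB m M := Nat.gcd_eq_gcd_ab m M
      have h2 : v ^ (G0 : ℤ) = 1 := by
        rw [hb, zpow_add, zpow_mul, zpow_mul, zpow_natCast, zpow_natCast, h,
          hvM v, one_zpow, one_zpow, mul_one]
      rwa [zpow_natCast] at h2
    · intro h
      obtain ⟨t, ht⟩ := hG0m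
      rw [ht, pow_mul, h, one_pow]
  by_cases hc : c ^ (M / G0) = 1
  · rw [if_pos hc, ← hker, ← hker']
    -- construct a solution v₀ with v₀ ^ m = c
    obtain ⟨k, hk⟩ := hg c
    have hkeq : g ^ k = c := hk
    have h1 : g ^ (k * ((M / G0 : ℕ) : ℤ)) = 1 := by
      rw [zpow_mul, zpow_natCast, hkeq, hc]
    have h2 : ((orderOf g : ℕ) : ℤ) ∣ k * ((M / G0 : ℕ) : ℤ) :=
      orderOf_dvd_iff_zpow_eq_one.mpr h1
    rw [hog, hMe, mul_comm k] at h2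
    have h3 : (G0 : ℤ) ∣ k := by
      rw [mul_comm ((M / G0 : ℕ) : ℤ) (G0 : ℤ), mul_comm ((M / G0 : ℕ) : ℤ) k] at h2
      exact (mul_dvd_mul_iff_right hMG0z).mp h2
    obtain ⟨t, ht⟩ := h3
    have hgMz : g ^ ((M : ℕ) : ℤ) = 1 := by
      rw [zpow_natCast]; exact hvM g
    have hv0m : (g ^ (Nat.gcdA m M * t)) ^ m = c := by
      have hb : (G0 : ℤ) = m * Nat.gcdA m M + M * Nat.gcdB m M := Nat.gcd_eq_gcd_ab m M
      have hkt : k = (m * Nat.gcdA m M + M * Nat.gcdB m M) * t := by rw [← hb, ← ht]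
      have hre : (↑m * Nat.gcdA m M + ↑M * Nat.gcdB m M) * t =
          Nat.gcdA m M * t * ↑m + ↑M * (Nat.gcdB m M * t) := by ring
      rw [← zpow_natCast (g ^ (Nat.gcdA m M * t)) m, ← zpow_mul, ← hkeq, hkt, hre,
        zpow_add, zpow_mul g (M : ℤ), hgMz, one_zpow, mul_one]
    -- bijection between solutions of v ^ m = c and v ^ m = 1
    apply Finset.card_nbij' (i := fun v => (g ^ (Nat.gcdA m M * t))⁻¹ * v)
      (j := fun w => (g ^ (Nat.gcdA m M * t)) * w)
    · intro v hv
      simp only [mem_coe, mem_filter, mem_univ, true_and] at hv ⊢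
      rw [mul_pow, inv_pow, hv0m, hv, inv_mul_cancel]
    · intro w hw
      simp only [mem_coe, mem_filter, mem_univ, true_and] at hw ⊢
      rw [mul_pow, hv0m, hw, mul_one]
    · intro v _; simp
    · intro w _; simp
  · rw [if_neg hc, card_eq_zero, Finset.filter_eq_empty_iff]
    intro v _
    intro hv
    apply hc
    have hmm : m * (M / G0) = (m / G0) * M := by
      conv_lhs => rw [← Nat.div_mul_cancel hG0m]
      rw [mul_assoc, Nat.mul_div_cancel' hG0M]
    rw [← hv, ← pow_mul, hmm, pow_mul, hvM]

lemma gcd_pow_sub_one (p : ℕ) (hp : 1 ≤ p) :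
    ∀ d n : ℕ, Nat.gcd (p ^ d - 1) (p ^ n - 1) = p ^ Nat.gcd d n - 1 := by
  intro d
  induction d using Nat.strong_induction_on with
  | _ d ih =>
    intro n
    rcases Nat.eq_zero_or_pos d with rfl | hd
    · simp
    · have hA1 : 1 ≤ p ^ (n % d) := Nat.one_le_pow _ _ hp
      have hB1 : 1 ≤ p ^ (d * (n / d)) := Nat.one_le_pow _ _ hp
      have hpd1 : 1 ≤ p ^ d := Nat.one_le_pow _ _ hp
      have hn1 : 1 ≤ p ^ n := Nat.one_le_pow _ _ hp
      obtain ⟨t, ht⟩ : (p ^ d - 1) ∣ (p ^ (d * (n / d)) - 1) := by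
        have := Nat.sub_dvd_pow_sub_pow (p ^ d) 1 (n / d)
        rwa [one_pow, ← pow_mul] at this
      have e1 : p ^ (n % d) * p ^ (d * (n / d)) = p ^ n := by
        rw [← pow_add, Nat.mod_add_div]
      have E : p ^ n - 1 = (p ^ (n % d) - 1) + (p ^ d - 1) * (p ^ (n % d) * t) := by
        zify [hA1, hB1, hpd1, hn1] at ht e1 ⊢
        linear_combination (p : ℤ) ^ (n % d) * ht - e1
      rw [E, Nat.gcd_add_mul_left_right, Nat.gcd_comm, ih (n % d) (Nat.mod_lt n hd) d,
        Nat.gcd_rec d n]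

lemma even_quot (p s n : ℕ) (hp : Odd p) (hp2 : 2 ≤ p) (hs : s ∣ n) (hs0 : 0 < s) :
    Even ((p ^ n - 1) / (p ^ s - 1)) ↔ Even (n / s) := by
  set t := ∑ k ∈ range (n / s), (p ^ s) ^ k with htdef
  have h1 : 1 ≤ p ^ s := Nat.one_le_pow _ _ (by omega)
  have h2 : 1 ≤ p ^ n := Nat.one_le_pow _ _ (by omega)
  have claim1 : (p ^ s - 1) * t = p ^ n - 1 := by
    zify [h1, h2]
    push_cast [htdef]
    rw [mul_comm, geom_sum_mul, ← pow_mul, Nat.mul_div_cancel' hs]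
  have hpos : 0 < p ^ s - 1 := by
    have : 2 ≤ p ^ s := le_trans hp2 (Nat.le_self_pow hs0.ne' p)
    omega
  have hquot : (p ^ n - 1) / (p ^ s - 1) = t := by
    rw [← claim1, Nat.mul_div_cancel_left _ hpos]
  have claim2 : t % 2 = (n / s) % 2 := by
    rw [htdef, Finset.sum_nat_mod]
    have : ∀ k ∈ range (n / s), (p ^ s) ^ k % 2 = 1 := by
      intro k _
      exact Nat.odd_iff.mp ((hp.pow).pow)
    rw [Finset.sum_congr rfl this]
    simp [Nat.mod_mod_of_dvd]
  rw [hquot, Nat.even_iff, Nat.even_iff, claim2]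


theorem sum_sq_delta_monomial_odd_char (p n : ℕ) (hp : p.Prime) (hodd : Odd p)
    (hn : 1 ≤ n) (K : Type*) [Field K] [Fintype K] [DecidableEq K]
    (hK : Fintype.card K = p ^ n) (i j : ℕ) (hij : j ≤ i)
    (F : K → K) (hF : ∀ x : K, F x = x ^ (p ^ i + p ^ j)) :
    (∑ a ∈ univ.filter (fun a : K => a ≠ 0), ∑ b : K, (deltaF F a b) ^ 2) =
      if Even (n / Nat.gcd (i - j) n) then
        p ^ n * (p ^ n - 1) * p ^ (Nat.gcd (i - j) n)
      else p ^ n * (p ^ n - 1) := by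
  classical
  haveI hpf : Fact p.Prime := ⟨hp⟩
  have hp1 : 1 ≤ p := hp.one_le
  have hp2' : p ≠ 2 := by have := Nat.odd_iff.mp hodd; omega
  haveI hp2 : Fact (2 < p) := ⟨by have := hp.two_le; omega⟩
  haveI hchar : CharP K p := by
    haveI hcp : CharP K (ringChar K) := ringChar.charP K
    obtain ⟨m, hrp, hcard⟩ := FiniteField.card K (ringChar K)
    have hdvd : p ∣ (ringChar K) ^ (m : ℕ) := by
      rw [← hcard, hK]; exact dvd_pow_self p (by omega)
    have heq : p = ringChar K :=
      (Nat.prime_dvd_prime_iff_eq hp hrp).mp (hp.dvd_of_dvd_pow hdvd)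
    rwa [heq]
  haveI : ExpChar K p := ExpChar.prime hp
  set q : ℕ := p ^ n with hqdef
  set s : ℕ := Nat.gcd (i - j) n with hsdef
  have hs0 : 0 < s := Nat.gcd_pos_of_pos_right _ (by omega)
  have hsn : s ∣ n := Nat.gcd_dvd_right _ _
  set m : ℕ := p ^ (i - j) - 1 with hmdef
  have hpij : p ^ j ≤ p ^ i := Nat.pow_le_pow_right (by omega) hij
  have hpipos : p ^ i ≠ 0 := (pow_pos (by omega : 0 < p) i).ne'
  have hpjpos : p ^ j ≠ 0 := (pow_pos (by omega : 0 < p) j).ne'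
  have he : p ^ i - p ^ j = p ^ j * m := by
    have hji : j + (i - j) = i := by omega
    rw [hmdef, Nat.mul_sub, mul_one, ← pow_add, hji]
  -- the linearized derivative
  set L : K → K → K := fun a x => a ^ p ^ j * x ^ p ^ i + a ^ p ^ i * x ^ p ^ j with hLdef
  have hD : ∀ a x : K, F (x + a) - F x = L a x + a ^ (p ^ i + p ^ j) := by
    intro a x
    simp only [hF, hLdef]
    rw [pow_add (x + a), add_pow_char_pow, add_pow_char_pow, pow_add x]
    ring
  -- Step A : for each a, the sum of squares equals q * (kernel size)
  have stepA : ∀ a : K, (∑ b : K, (deltaF F a b) ^ 2) =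
      Fintype.card K * #(univ.filter fun x => L a x = 0) := by
    intro a
    have h1 := sum_sq_card_fiber (fun x : K => F (x + a) - F x)
    have h2 : ((univ ×ˢ univ).filter fun z : K × K =>
        (F (z.1 + a) - F z.1) = (F (z.2 + a) - F z.2)) =
        ((univ ×ˢ univ).filter fun z : K × K => L a z.1 = L a z.2) := by
      apply filter_congr
      intro z _
      simp only [hD, add_left_inj]
    have h3 := card_pairs_sub (L a) (fun x y => by
      simp only [hLdef]
      rw [sub_pow_char_pow, sub_pow_char_pow]
      ring)
    simp only [deltaF]
    rw [h1, h2, h3]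
  -- the number of solutions of w ^ m = -1 among units
  set NN : ℕ := #(univ.filter fun w : Kˣ => w ^ m = -1) with hNNdef
  -- Step B : for a ≠ 0 the kernel has size 1 + NN
  have stepB : ∀ a : K, a ≠ 0 → #(univ.filter fun x => L a x = 0) = 1 + NN := by
    intro a ha
    have hL0 : L a 0 = 0 := by
      simp [hLdef, zero_pow hpipos, zero_pow hpjpos]
    have hsplit : (univ.filter fun x : K => L a x = 0) =
        insert (0 : K) (univ.filter fun x : K => x ≠ 0 ∧ L a x = 0) := by
      ext x
      simp only [mem_filter, mem_univ, true_and, mem_insert]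
      by_cases hx : x = 0
      · subst hx; simp [hL0]
      · simp [hx]
    have hnot : (0 : K) ∉ (univ.filter fun x : K => x ≠ 0 ∧ L a x = 0) := by simp
    -- key pointwise equivalence
    have hkey : ∀ x : K, x ≠ 0 → (L a x = 0 ↔ (x * a⁻¹) ^ (p ^ i - p ^ j) = -1) := by
      intro x hx
      have hxe : x ^ p ^ i = x ^ (p ^ i - p ^ j) * x ^ p ^ j := by
        rw [← pow_add, Nat.sub_add_cancel hpij]
      have hae : a ^ p ^ i = a ^ (p ^ i - p ^ j) * a ^ p ^ j := by
        rw [← pow_add, Nat.sub_add_cancel hpij]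
      have hfact : L a x =
          (a ^ p ^ j * x ^ p ^ j) * (x ^ (p ^ i - p ^ j) + a ^ (p ^ i - p ^ j)) := by
        simp only [hLdef]; rw [hxe, hae]; ring
      have hnz : a ^ p ^ j * x ^ p ^ j ≠ 0 :=
        mul_ne_zero (pow_ne_zero _ ha) (pow_ne_zero _ hx)
      have hanz : a ^ (p ^ i - p ^ j) ≠ 0 := pow_ne_zero _ ha
      rw [hfact, mul_eq_zero]
      constructor
      · rintro (h | h)
        · exact absurd h hnz
        · have hxeq : x ^ (p ^ i - p ^ j) = -(a ^ (p ^ i - p ^ j)) :=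
            eq_neg_of_add_eq_zero_left h
          rw [mul_pow, inv_pow, hxeq, neg_mul, mul_inv_cancel₀ hanz]
      · intro h
        right
        rw [mul_pow, inv_pow] at h
        have hxx : x ^ (p ^ i - p ^ j) = -a ^ (p ^ i - p ^ j) := by
          calc x ^ (p ^ i - p ^ j)
              = (x ^ (p ^ i - p ^ j) * (a ^ (p ^ i - p ^ j))⁻¹) * a ^ (p ^ i - p ^ j) := by
                field_simp
            _ = -1 * a ^ (p ^ i - p ^ j) := by rw [h]
            _ = -a ^ (p ^ i - p ^ j) := by ring
        rw [hxx]; ring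
    have hB2 : #(univ.filter fun x : K => x ≠ 0 ∧ L a x = 0) =
        #(univ.filter fun u : K => u ≠ 0 ∧ u ^ (p ^ i - p ^ j) = -1) := by
      apply Finset.card_nbij' (i := fun x => x * a⁻¹) (j := fun u => u * a)
      · intro x hx
        simp only [mem_coe, mem_filter, mem_univ, true_and] at hx ⊢
        exact ⟨mul_ne_zero hx.1 (inv_ne_zero ha), (hkey x hx.1).mp hx.2⟩
      · intro u hu
        simp only [mem_coe, mem_filter, mem_univ, true_and] at hu ⊢
        have hune : u * a ≠ 0 := mul_ne_zero hu.1 ha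
        refine ⟨hune, (hkey (u * a) hune).mpr ?_⟩
        rw [mul_assoc, mul_inv_cancel₀ ha, mul_one]
        exact hu.2
      · intro x _; simp [mul_assoc, inv_mul_cancel₀ ha]
      · intro u _; simp [mul_assoc, mul_inv_cancel₀ ha]
    have hfrinj : Function.Injective (fun u : K => u ^ p ^ j) := by
      have hfr := (iterateFrobenius K p j).injective
      intro u v huv
      apply hfr
      rwa [iterateFrobenius_def, iterateFrobenius_def]
    have hfrsurj : Function.Surjective (fun u : K => u ^ p ^ j) :=
      Finite.injective_iff_surjective.mp hfrinj
    have hB3 : #(univ.filter fun u : K => u ≠ 0 ∧ u ^ (p ^ i - p ^ j) = -1) =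
        #(univ.filter fun v : K => v ≠ 0 ∧ v ^ m = -1) := by
      apply Finset.card_bij (i := fun u _ => u ^ p ^ j)
      · intro u hu
        simp only [mem_filter, mem_univ, true_and] at hu ⊢
        refine ⟨pow_ne_zero _ hu.1, ?_⟩
        rw [← pow_mul, ← he]
        exact hu.2
      · intro u _ v _ huv
        exact hfrinj huv
      · intro v hv
        simp only [mem_filter, mem_univ, true_and] at hv
        obtain ⟨u, hu⟩ := hfrsurj v
        simp only at hu
        have hu0 : u ≠ 0 := by
          intro h0
          apply hv.1
          rw [← hu, h0, zero_pow hpjpos]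
        refine ⟨u, mem_filter.mpr ⟨mem_univ _, hu0, ?_⟩, hu⟩
        rw [he, pow_mul, hu]
        exact hv.2
    have hB4 : #(univ.filter fun v : K => v ≠ 0 ∧ v ^ m = -1) = NN := by
      rw [hNNdef]
      refine (Finset.card_bij (i := fun (w : Kˣ) _ => (w : K)) ?_ ?_ ?_).symm
      · intro w hw
        simp only [mem_filter, mem_univ, true_and] at hw ⊢
        refine ⟨w.ne_zero, ?_⟩
        have hval := congrArg (Units.val) hw
        simpa using hval
      · intro w _ w' _ h
        exact Units.ext h
      · intro v hv
        simp only [mem_filter, mem_univ, true_and] at hv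
        refine ⟨Units.mk0 v hv.1, mem_filter.mpr ⟨mem_univ _, ?_⟩, rfl⟩
        apply Units.ext
        simpa using hv.2
    rw [hsplit, card_insert_of_notMem hnot, hB2, hB3, hB4, add_comm]
  -- evaluate NN
  haveI : IsCyclic Kˣ := inferInstance
  have hcardU : Fintype.card Kˣ = q - 1 := by rw [Fintype.card_units, hK]
  have hgcd : Nat.gcd m (Fintype.card Kˣ) = p ^ s - 1 := by
    rw [hcardU, hqdef, hmdef, hsdef]
    exact gcd_pow_sub_one p hp1 (i - j) n
  have hm1 : (-1 : Kˣ) ≠ 1 := by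
    intro h
    have hval := congrArg (Units.val) h
    simp only [Units.val_neg, Units.val_one] at hval
    exact CharP.neg_one_ne_one K p hval
  have hNN : NN = if Even (n / s) then p ^ s - 1 else 0 := by
    rw [hNNdef, card_pow_eq_cyclic m (-1 : Kˣ), hgcd, hcardU]
    have hquot_iff : ((-1 : Kˣ) ^ ((q - 1) / (p ^ s - 1)) = 1) ↔ Even (n / s) := by
      rw [← even_quot p s n hodd hp.two_le hsn hs0]
      constructor
      · intro h
        by_contra hodd'
        have hoo : Odd ((q - 1) / (p ^ s - 1)) := Nat.not_even_iff_odd.mp hodd'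
        rw [hoo.neg_one_pow] at h
        exact hm1 h
      · intro h
        exact h.neg_one_pow
    by_cases hcase : Even (n / s)
    · rw [if_pos (hquot_iff.mpr hcase), if_pos hcase]
    · rw [if_neg (fun hc => hcase (hquot_iff.mp hc)), if_neg hcase]
  -- final assembly
  have htotal : (∑ a ∈ univ.filter (fun a : K => a ≠ 0), ∑ b : K, (deltaF F a b) ^ 2) =
      (q - 1) * (q * (1 + NN)) := by
    have hsum : ∀ a ∈ univ.filter (fun a : K => a ≠ 0),
        (∑ b : K, (deltaF F a b) ^ 2) = q * (1 + NN) := by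
      intro a ha
      have ha0 : a ≠ 0 := (mem_filter.mp ha).2
      rw [stepA a, stepB a ha0, hK]
    rw [Finset.sum_congr rfl hsum, sum_const, smul_eq_mul]
    congr 1
    rw [filter_ne' univ (0 : K), card_erase_of_mem (mem_univ 0), card_univ, hK]
  rw [htotal, hNN]
  have hps1 : 1 ≤ p ^ s := Nat.one_le_pow _ _ (by omega)
  by_cases hcase : Even (n / s)
  · rw [if_pos hcase, if_pos hcase]
    have h1 : 1 + (p ^ s - 1) = p ^ s := by omega
    rw [h1]
    ring
  · rw [if_neg hcase, if_neg hcase]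
    ring
end

section
/- Let G be a finite abelian group of odd order n ≥ 3 and let F : G → G be a bijection whose ambiguity achieves the optimum value 𝒜(F) = 2(n − 1). Then there exist an additive character χ of G and a nontrivial additive character ψ of G such that |Σ_{x ∈ G} ψ(F(x))·conj(χ(x))|² ≥ n + 4 (equivalently, the nonlinearity satisfies 𝒩ℒ(F) ≤ (n − √(n+4))/n). -/
open Finset

/-- The ambiguity `𝒜(F) = Σ_{a ≠ 0} Σ_b (δ_F(a,b) choose 2)`. -/
def ambiguity {G₁ G₂ : Type*} [AddCommGroup G₁] [Fintype G₁] [DecidableEq G₁]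
    [AddCommGroup G₂] [Fintype G₂] [DecidableEq G₂] (F : G₁ → G₂) : ℕ :=
  ∑ a ∈ univ.filter (fun a : G₁ => a ≠ 0), ∑ b : G₂, (deltaF F a b).choose 2

set_option linter.unusedSectionVars false

private lemma sum_comm3 {α β γ M : Type*} [AddCommMonoid M] [Fintype α] [Fintype β]
    [Fintype γ] (f : α → β → γ → M) :
    ∑ a : α, ∑ b : β, ∑ c : γ, f a b c = ∑ b : β, ∑ c : γ, ∑ a : α, f a b c := by
  rw [Finset.sum_comm]
  exact Finset.sum_congr rfl fun b _ => Finset.sum_comm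

section Aux
variable {G : Type*} [AddCommGroup G] [Fintype G] [DecidableEq G]

private lemma delta_cast (F : G → G) (a b : G) :
    (deltaF F a b : ℂ) = ∑ x : G, if F (x + a) - F x = b then (1 : ℂ) else 0 := by
  rw [deltaF, Finset.card_filter]
  push_cast
  rfl

/-- autocorrelation `D ψ a = Σ_x ψ(F(x+a) - F x)`. -/
private noncomputable def Dfun (F : G → G) (ψ : AddChar G ℂ) (a : G) : ℂ :=
  ∑ x : G, ψ (F (x + a) - F x)

private lemma Dfun_eq (F : G → G) (ψ : AddChar G ℂ) (a : G) :
    Dfun F ψ a = ∑ b : G, (deltaF F a b : ℂ) * ψ b := by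
  calc ∑ x : G, ψ (F (x + a) - F x)
      = ∑ x : G, ∑ b : G, (if F (x + a) - F x = b then ψ b else 0) := by
        refine Finset.sum_congr rfl fun x _ => ?_
        rw [Finset.sum_ite_eq univ (F (x + a) - F x) ψ]
        simp
    _ = ∑ b : G, ∑ x : G, (if F (x + a) - F x = b then ψ b else 0) := Finset.sum_comm
    _ = ∑ b : G, (deltaF F a b : ℂ) * ψ b := by
        refine Finset.sum_congr rfl fun b _ => ?_
        rw [delta_cast, Finset.sum_mul]
        simp

private lemma conj_Dfun (F : G → G) (ψ : AddChar G ℂ) (a : G) :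
    (starRingEnd ℂ) (Dfun F ψ a) = ∑ x : G, ψ (F x - F (x + a)) := by
  rw [Dfun, map_sum]
  refine Finset.sum_congr rfl fun x _ => ?_
  rw [← AddChar.map_neg_eq_conj, neg_sub]

private lemma Dfun_neg (F : G → G) (ψ : AddChar G ℂ) (a : G) :
    Dfun F ψ (-a) = (starRingEnd ℂ) (Dfun F ψ a) := by
  rw [conj_Dfun, Dfun]
  refine Fintype.sum_equiv (Equiv.subRight a) _ _ fun x => ?_
  simp [sub_eq_add_neg]

/-- The Walsh coefficient. -/
private noncomputable def Wfun (F : G → G) (ψ χ : AddChar G ℂ) : ℂ :=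
  ∑ x : G, ψ (F x) * (starRingEnd ℂ) (χ x)

private lemma W_mul_conj (F : G → G) (ψ χ : AddChar G ℂ) :
    Wfun F ψ χ * (starRingEnd ℂ) (Wfun F ψ χ)
      = ∑ a : G, χ a * (starRingEnd ℂ) (Dfun F ψ a) := by
  rw [Wfun, map_sum, Finset.sum_mul_sum]
  have h1 : ∀ x y : G,
      ψ (F x) * (starRingEnd ℂ) (χ x) *
        ((starRingEnd ℂ) (ψ (F y) * (starRingEnd ℂ) (χ y))) =
      χ (y - x) * ψ (F x - F y) := by
    intro x y
    rw [map_mul, Complex.conj_conj, ← AddChar.map_neg_eq_conj, ← AddChar.map_neg_eq_conj,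
      sub_eq_add_neg y x, sub_eq_add_neg (F x) (F y), AddChar.map_add_eq_mul,
      AddChar.map_add_eq_mul]
    ring
  simp_rw [h1, conj_Dfun, Finset.mul_sum]
  conv_rhs => rw [Finset.sum_comm]
  refine Finset.sum_congr rfl fun x _ => ?_
  refine Fintype.sum_equiv (Equiv.addLeft (-x)) _ _ fun y => ?_
  simp [sub_eq_neg_add]

private lemma sum_chi (f : G → ℂ) :
    ∑ χ : AddChar G ℂ, ∑ a : G, χ a * f a = (Fintype.card G : ℂ) * f 0 := by
  rw [Finset.sum_comm]
  simp_rw [← Finset.sum_mul, AddChar.sum_apply_eq_ite]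
  rw [Finset.sum_eq_single (0 : G)]
  · rw [if_pos rfl]
  · intro b _ hb; rw [if_neg hb, zero_mul]
  · intro h; exact absurd (Finset.mem_univ _) h

private lemma sum_chi_sq (f : G → ℂ) :
    ∑ χ : AddChar G ℂ, (∑ a : G, χ a * f a) ^ 2
      = (Fintype.card G : ℂ) * ∑ a : G, f a * f (-a) := by
  have key : ∀ (χ : AddChar G ℂ) (a b : G),
      (χ a * f a) * (χ b * f b) = χ (a + b) * (f a * f b) := by
    intro χ a b
    rw [AddChar.map_add_eq_mul]
    ring
  simp_rw [sq, Finset.sum_mul_sum, key]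
  rw [sum_comm3]
  simp_rw [← Finset.sum_mul, AddChar.sum_apply_eq_ite]
  rw [Finset.mul_sum]
  refine Finset.sum_congr rfl fun a _ => ?_
  rw [Finset.sum_eq_single (-a)]
  · rw [if_pos (add_neg_cancel a)]
  · intro b _ hb
    rw [if_neg (fun h => hb (eq_neg_of_add_eq_zero_right h)), zero_mul]
  · intro h; exact absurd (Finset.mem_univ _) h

private lemma sum_psi_normD (F : G → G) (a : G) :
    ∑ ψ : AddChar G ℂ, Dfun F ψ a * (starRingEnd ℂ) (Dfun F ψ a)
      = (Fintype.card G : ℂ) * ∑ b : G, (deltaF F a b : ℂ) ^ 2 := by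
  have h : ∀ ψ : AddChar G ℂ, Dfun F ψ a * (starRingEnd ℂ) (Dfun F ψ a)
      = ∑ b : G, ∑ c : G, ((deltaF F a b : ℂ) * (deltaF F a c : ℂ)) * ψ (b - c) := by
    intro ψ
    rw [Dfun_eq, map_sum, Finset.sum_mul_sum]
    refine Finset.sum_congr rfl fun b _ => Finset.sum_congr rfl fun c _ => ?_
    rw [map_mul, ← AddChar.map_neg_eq_conj, sub_eq_add_neg b c, AddChar.map_add_eq_mul,
      Complex.conj_natCast]
    ring
  simp_rw [h]
  rw [sum_comm3]
  simp_rw [← Finset.mul_sum, AddChar.sum_apply_eq_ite]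
  rw [Finset.mul_sum]
  refine Finset.sum_congr rfl fun b _ => ?_
  rw [Finset.sum_eq_single b]
  · rw [sub_self, if_pos rfl]; ring
  · intro c _ hc
    rw [if_neg (fun h => hc (by rw [sub_eq_zero] at h; exact h.symm)), mul_zero]
  · intro h; exact absurd (Finset.mem_univ _) h

private lemma moment2 (F : G → G) :
    ∑ ψ : AddChar G ℂ, ∑ χ : AddChar G ℂ, Wfun F ψ χ * (starRingEnd ℂ) (Wfun F ψ χ)
      = (Fintype.card G : ℂ) ^ 3 := by
  simp_rw [W_mul_conj, sum_chi]
  have hD0 : ∀ ψ : AddChar G ℂ, Dfun F ψ 0 = (Fintype.card G : ℂ) := by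
    intro ψ
    rw [Dfun]
    simp [Finset.card_univ]
  simp_rw [hD0, Complex.conj_natCast]
  rw [Finset.sum_const, Finset.card_univ, AddChar.card_eq, nsmul_eq_mul]
  ring

private lemma moment4 (F : G → G) :
    ∑ ψ : AddChar G ℂ, ∑ χ : AddChar G ℂ, (Wfun F ψ χ * (starRingEnd ℂ) (Wfun F ψ χ)) ^ 2
      = (Fintype.card G : ℂ) ^ 2 * ∑ a : G, ∑ b : G, (deltaF F a b : ℂ) ^ 2 := by
  simp_rw [W_mul_conj, sum_chi_sq]
  have h : ∀ (ψ : AddChar G ℂ) (a : G),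
      (starRingEnd ℂ) (Dfun F ψ a) * (starRingEnd ℂ) (Dfun F ψ (-a))
        = Dfun F ψ a * (starRingEnd ℂ) (Dfun F ψ a) := by
    intro ψ a
    rw [Dfun_neg, Complex.conj_conj]
    ring
  simp_rw [h, ← Finset.mul_sum]
  rw [Finset.sum_comm]
  simp_rw [sum_psi_normD]
  rw [← Finset.mul_sum]
  ring

private lemma delta_sum_row (F : G → G) (a : G) : ∑ b : G, deltaF F a b = Fintype.card G := by
  rw [← Finset.card_univ]
  exact (Finset.card_eq_sum_card_fiberwise (fun x _ => Finset.mem_univ (F (x + a) - F x))).symm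

private lemma delta_zero_s7 (F : G → G) (b : G) :
    deltaF F 0 b = if b = 0 then Fintype.card G else 0 := by
  rw [deltaF]
  split_ifs with h
  · subst h
    rw [Finset.filter_true_of_mem, Finset.card_univ]
    intro x _; simp
  · rw [Finset.filter_false_of_mem, Finset.card_empty]
    intro x _
    simp only [add_zero, sub_self]
    exact fun hh => h hh.symm

private lemma sq_eq_choose (m : ℕ) : m * m = 2 * m.choose 2 + m := by
  rcases m with _ | k
  · simp
  · rw [Nat.choose_two_right]
    have h0 : (k + 1) * (k + 1 - 1) = (k + 1) * k := by simp
    rw [h0]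
    have h2 : 2 * ((k + 1) * k / 2) = (k + 1) * k := by
      refine Nat.two_mul_div_two_of_even ?_
      rw [mul_comm]
      exact Nat.even_mul_succ_self k
    rw [h2]
    ring

private lemma delta_total (F : G → G) (n : ℕ) (hcard : Fintype.card G = n)
    (hopt : ambiguity F = 2 * (n - 1)) :
    ∑ a : G, ∑ b : G, deltaF F a b * deltaF F a b
      = n * n + (n - 1) * n + 4 * (n - 1) := by
  have h0 : ∑ b : G, deltaF F 0 b * deltaF F 0 b = n * n := by
    simp_rw [delta_zero_s7, hcard]
    rw [Finset.sum_eq_single (0 : G)]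
    · rw [if_pos rfl]
    · intro b _ hb; rw [if_neg hb, mul_zero]
    · intro h; exact absurd (Finset.mem_univ _) h
  have hrest : ∀ a : G, a ≠ 0 → ∑ b : G, deltaF F a b * deltaF F a b
      = 2 * (∑ b : G, (deltaF F a b).choose 2) + n := by
    intro a _
    simp_rw [sq_eq_choose]
    rw [Finset.sum_add_distrib, ← Finset.mul_sum, delta_sum_row, hcard]
  rw [← Finset.add_sum_erase _ _ (Finset.mem_univ (0 : G)), h0,
    Finset.sum_congr rfl (fun a ha => hrest a (Finset.mem_erase.1 ha).1),
    Finset.sum_add_distrib, ← Finset.mul_sum, Finset.sum_const,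
    Finset.card_erase_of_mem (Finset.mem_univ _), Finset.card_univ, hcard]
  have hamb : ∑ a ∈ (univ : Finset G).erase 0, ∑ b : G, (deltaF F a b).choose 2
      = 2 * (n - 1) := by
    rw [← hopt, ambiguity, Finset.filter_ne']
  rw [hamb, smul_eq_mul]
  set m := n - 1 with hm
  ring

end Aux

theorem optimum_ambiguity_nonlinearity_upper_bound {G : Type*}
    [AddCommGroup G] [Fintype G] [DecidableEq G] (n : ℕ) (hn : 3 ≤ n) (hodd : Odd n)
    (hcard : Fintype.card G = n) (F : G → G) (hF : Function.Bijective F)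
    (hopt : ambiguity F = 2 * (n - 1)) :
    ∃ (χ ψ : AddChar G ℂ), ψ ≠ 1 ∧
      (n : ℝ) + 4 ≤ ‖∑ x : G, ψ (F x) * (starRingEnd ℂ) (χ x)‖ ^ 2 := by
  classical
  by_contra hcon
  push_neg at hcon
  have hr3 : (3 : ℝ) ≤ (n : ℝ) := by exact_mod_cast hn
  -- second moment
  have hA : ∑ ψ : AddChar G ℂ, ∑ χ : AddChar G ℂ, Complex.normSq (Wfun F ψ χ)
      = (n : ℝ) ^ 3 := by
    have h := moment2 F
    rw [hcard] at h
    simp_rw [Complex.mul_conj] at h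
    exact_mod_cast h
  -- fourth moment
  have h1n : (1 : ℕ) ≤ n := by omega
  have hT : ((n * n + (n - 1) * n + 4 * (n - 1) : ℕ) : ℝ)
      = (n : ℝ) * n + ((n : ℝ) - 1) * n + 4 * ((n : ℝ) - 1) := by
    push_cast [h1n]
    ring
  have hB : ∑ ψ : AddChar G ℂ, ∑ χ : AddChar G ℂ, (Complex.normSq (Wfun F ψ χ)) ^ 2
      = (n : ℝ) ^ 2 * ((n : ℝ) * n + ((n : ℝ) - 1) * n + 4 * ((n : ℝ) - 1)) := by
    have h := moment4 F
    rw [hcard] at h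
    have hd : ∑ a : G, ∑ b : G, (deltaF F a b : ℂ) ^ 2
        = ((n * n + (n - 1) * n + 4 * (n - 1) : ℕ) : ℂ) := by
      rw [← delta_total F n hcard hopt]
      push_cast [sq]
      rfl
    rw [hd] at h
    simp_rw [Complex.mul_conj] at h
    rw [← hT]
    exact_mod_cast h
  -- the ψ = 1 column
  have hW1 : ∀ χ : AddChar G ℂ, Complex.normSq (Wfun F 1 χ)
      = if χ = 1 then (n : ℝ) ^ 2 else 0 := by
    intro χ
    have h1 : Wfun F 1 χ = (starRingEnd ℂ) (∑ x : G, χ x) := by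
      rw [Wfun, map_sum]
      simp
    rw [h1, AddChar.sum_eq_ite]
    by_cases h : χ = 0
    · rw [if_pos h, if_pos (by rw [h]; rfl)]
      rw [Complex.conj_natCast, hcard, Complex.normSq_natCast]
      push_cast
      ring
    · rw [if_neg h, if_neg (fun hh => h (by rw [hh]; rfl)), map_zero, Complex.normSq_zero]
  have hcol2 : ∑ χ : AddChar G ℂ, Complex.normSq (Wfun F 1 χ) = (n : ℝ) ^ 2 := by
    simp_rw [hW1]
    rw [Finset.sum_ite_eq' univ (1 : AddChar G ℂ) (fun _ => (n : ℝ) ^ 2)]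
    simp
  have hW1sq : ∀ χ : AddChar G ℂ, (Complex.normSq (Wfun F 1 χ)) ^ 2
      = if χ = 1 then (n : ℝ) ^ 4 else 0 := by
    intro χ
    rw [hW1]
    split_ifs
    · ring
    · norm_num
  have hcol4 : ∑ χ : AddChar G ℂ, (Complex.normSq (Wfun F 1 χ)) ^ 2 = (n : ℝ) ^ 4 := by
    simp_rw [hW1sq]
    rw [Finset.sum_ite_eq' univ (1 : AddChar G ℂ) (fun _ => (n : ℝ) ^ 4)]
    simp
  -- restricted sums to ψ ≠ 1
  set s : Finset (AddChar G ℂ × AddChar G ℂ) :=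
    ((univ : Finset (AddChar G ℂ)).erase 1) ×ˢ (univ : Finset (AddChar G ℂ)) with hs
  have hsplit2 : ∑ p ∈ s, Complex.normSq (Wfun F p.1 p.2) = (n : ℝ) ^ 3 - (n : ℝ) ^ 2 := by
    rw [hs, Finset.sum_product]
    have h := Finset.add_sum_erase (univ : Finset (AddChar G ℂ))
      (fun ψ => ∑ χ : AddChar G ℂ, Complex.normSq (Wfun F ψ χ)) (Finset.mem_univ 1)
    rw [hA] at h
    rw [hcol2] at h
    linarith
  have hsplit4 : ∑ p ∈ s, (Complex.normSq (Wfun F p.1 p.2)) ^ 2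
      = (n : ℝ) ^ 2 * ((n : ℝ) * n + ((n : ℝ) - 1) * n + 4 * ((n : ℝ) - 1)) - (n : ℝ) ^ 4 := by
    rw [hs, Finset.sum_product]
    have h := Finset.add_sum_erase (univ : Finset (AddChar G ℂ))
      (fun ψ => ∑ χ : AddChar G ℂ, (Complex.normSq (Wfun F ψ χ)) ^ 2) (Finset.mem_univ 1)
    rw [hB] at h
    rw [hcol4] at h
    linarith
  have hS2pos : 0 < ∑ p ∈ s, Complex.normSq (Wfun F p.1 p.2) := by
    rw [hsplit2]; nlinarith
  have hub : ∀ p ∈ s, Complex.normSq (Wfun F p.1 p.2) < (n : ℝ) + 4 := by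
    intro p hp
    have hp1 : p.1 ≠ 1 := by
      rw [hs] at hp
      exact (Finset.mem_erase.1 (Finset.mem_product.1 hp).1).1
    have h := hcon p.2 p.1 hp1
    rw [Complex.sq_norm] at h
    simpa only [Wfun] using h
  have hex : ∃ p ∈ s, 0 < Complex.normSq (Wfun F p.1 p.2) := by
    by_contra hno
    push_neg at hno
    have h := Finset.sum_nonpos hno
    linarith
  obtain ⟨q, hq, hqpos⟩ := hex
  have hlt : ∑ p ∈ s, (Complex.normSq (Wfun F p.1 p.2)) ^ 2
      < ∑ p ∈ s, ((n : ℝ) + 4) * Complex.normSq (Wfun F p.1 p.2) := by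
    refine Finset.sum_lt_sum (fun p hp => ?_) ⟨q, hq, ?_⟩
    · have h1 := hub p hp
      have h2 : 0 ≤ Complex.normSq (Wfun F p.1 p.2) := Complex.normSq_nonneg _
      nlinarith
    · have h1 := hub q hq
      nlinarith
  rw [← Finset.mul_sum, hsplit2, hsplit4] at hlt
  nlinarith [hlt]
end

section
/- Let G₁ and G₂ be finite abelian groups and let F : G₁ → G₂ be any function. Then 2·𝒜(F) ≥ (|G₁| − 1)·(⌈|G₁|²/|G₂|⌉ − |G₁|), where ⌈·⌉ denotes the ceiling of the rational number |G₁|²/|G₂|. -/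
open Finset

lemma two_choose_two (d : ℕ) : (2 * d.choose 2 : ℤ) = d ^ 2 - d := by
  induction d with
  | zero => simp
  | succ n ih =>
    rw [Nat.choose_succ_succ, Nat.choose_one_right]
    push_cast at ih ⊢
    ring_nf
    ring_nf at ih
    linarith

theorem ambiguity_general_lower_bound {G₁ G₂ : Type*}
    [AddCommGroup G₁] [Fintype G₁] [DecidableEq G₁]
    [AddCommGroup G₂] [Fintype G₂] [DecidableEq G₂] (F : G₁ → G₂) :
    ((Fintype.card G₁ : ℤ) - 1) *
        (⌈((Fintype.card G₁ : ℚ) ^ 2 / (Fintype.card G₂ : ℚ))⌉ - (Fintype.card G₁ : ℤ)) ≤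
      2 * (ambiguity F : ℤ) := by
  set n := Fintype.card G₁
  set m := Fintype.card G₂
  have hm : 0 < m := Fintype.card_pos
  -- sum of δ over b is n
  have hsum : ∀ a : G₁, ∑ b : G₂, (deltaF F a b : ℤ) = n := by
    intro a
    have := Finset.card_eq_sum_card_fiberwise
      (f := fun x : G₁ => F (x + a) - F x) (s := univ) (t := univ) (fun x _ => mem_univ _)
    rw [Finset.card_univ] at this
    simp only [deltaF]
    exact_mod_cast this.symm
  -- Cauchy–Schwarz: per a, ∑ δ² ≥ ⌈n²/m⌉
  have hCS : ∀ a : G₁, (⌈((n : ℚ) ^ 2 / (m : ℚ))⌉ : ℤ) ≤ ∑ b : G₂, (deltaF F a b : ℤ) ^ 2 := by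
    intro a
    rw [Int.ceil_le]
    have h := sq_sum_le_card_mul_sum_sq (s := (univ : Finset G₂))
      (f := fun b => (deltaF F a b : ℤ))
    rw [hsum a, Finset.card_univ] at h
    rw [div_le_iff₀ (by exact_mod_cast hm)]
    push_cast
    calc ((n : ℚ)) ^ 2 ≤ (m : ℚ) * ∑ b : G₂, (deltaF F a b : ℚ) ^ 2 := by exact_mod_cast h
      _ = (∑ b : G₂, (deltaF F a b : ℚ) ^ 2) * m := by ring
  -- per a bound
  have hper : ∀ a : G₁, (⌈((n : ℚ) ^ 2 / (m : ℚ))⌉ : ℤ) - n ≤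
      2 * ∑ b : G₂, ((deltaF F a b).choose 2 : ℤ) := by
    intro a
    have : 2 * ∑ b : G₂, ((deltaF F a b).choose 2 : ℤ)
        = ∑ b : G₂, (deltaF F a b : ℤ) ^ 2 - ∑ b : G₂, (deltaF F a b : ℤ) := by
      rw [Finset.mul_sum, ← Finset.sum_sub_distrib]
      exact Finset.sum_congr rfl fun b _ => two_choose_two _
    rw [this, hsum a]
    linarith [hCS a]
  -- sum over a ≠ 0
  have hcard : (univ.filter (fun a : G₁ => a ≠ 0)).card = n - 1 := by
    rw [Finset.filter_ne', Finset.card_erase_of_mem (mem_univ _), Finset.card_univ]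
  have key : ((n : ℤ) - 1) * ((⌈((n : ℚ) ^ 2 / (m : ℚ))⌉ : ℤ) - n) ≤
      ∑ a ∈ univ.filter (fun a : G₁ => a ≠ 0), 2 * ∑ b : G₂, ((deltaF F a b).choose 2 : ℤ) := by
    have := Finset.card_nsmul_le_sum (univ.filter (fun a : G₁ => a ≠ 0))
      (fun a => 2 * ∑ b : G₂, ((deltaF F a b).choose 2 : ℤ)) _ (fun a _ => hper a)
    rw [hcard] at this
    have hn1 : ((n - 1 : ℕ) : ℤ) = (n : ℤ) - 1 := by
      have : 1 ≤ n := Fintype.card_pos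
      push_cast [this]; ring
    rw [nsmul_eq_mul, hn1] at this
    exact this
  calc ((n : ℤ) - 1) * ((⌈((n : ℚ) ^ 2 / (m : ℚ))⌉ : ℤ) - n)
      ≤ ∑ a ∈ univ.filter (fun a : G₁ => a ≠ 0), 2 * ∑ b : G₂, ((deltaF F a b).choose 2 : ℤ) := key
    _ = 2 * (ambiguity F : ℤ) := by
        rw [ambiguity]; push_cast [Finset.mul_sum]; rfl
end

section
/- Let G₁ and G₂ be finite abelian groups with |G₁| ≥ 2 and |G₂| ≥ 2, and let F : G₁ → G₂ be a function with differential uniformity k = Δ_F. Then 2·𝒜(F) ≥ (|G₁| − 2)·⌈|G₁|²/|G₂|⌉ + ⌈(|G₁| − k)²/(|G₂| − 1)⌉ + k² − |G₁|·(|G₁| − 1), where ⌈·⌉ denotes the ceiling of a rational number. -/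
open Finset

/-- The differential uniformity `Δ_F = max_{a ≠ 0, b} δ_F(a,b)`. -/
def diffUnif {G₁ G₂ : Type*} [AddCommGroup G₁] [Fintype G₁] [DecidableEq G₁]
    [AddCommGroup G₂] [Fintype G₂] [DecidableEq G₂] (F : G₁ → G₂) : ℕ :=
  (univ.filter (fun a : G₁ => a ≠ 0)).sup fun a => univ.sup fun b : G₂ => deltaF F a b

lemma two_mul_choose_two' (m : ℕ) : (2 * m.choose 2 : ℤ) = (m : ℤ) ^ 2 - m := by
  induction m with
  | zero => simp
  | succ n ih =>
    rw [Nat.choose_succ_succ, Nat.choose_one_right]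
    push_cast
    push_cast at ih
    linarith [ih]

lemma sum_deltaF {G₁ G₂ : Type*} [AddCommGroup G₁] [Fintype G₁] [DecidableEq G₁]
    [AddCommGroup G₂] [Fintype G₂] [DecidableEq G₂] (F : G₁ → G₂) (a : G₁) :
    ∑ b : G₂, deltaF F a b = Fintype.card G₁ := by
  rw [← Finset.card_univ]
  symm
  exact Finset.card_eq_sum_card_fiberwise (fun x _ => mem_univ (F (x + a) - F x))

theorem ambiguity_lower_bound_diff_uniformity {G₁ G₂ : Type*}
    [AddCommGroup G₁] [Fintype G₁] [DecidableEq G₁]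
    [AddCommGroup G₂] [Fintype G₂] [DecidableEq G₂]
    (h₁ : 2 ≤ Fintype.card G₁) (h₂ : 2 ≤ Fintype.card G₂)
    (F : G₁ → G₂) (k : ℕ) (hk : k = diffUnif F) :
    ((Fintype.card G₁ : ℤ) - 2) * ⌈((Fintype.card G₁ : ℚ) ^ 2 / (Fintype.card G₂ : ℚ))⌉
        + ⌈(((Fintype.card G₁ : ℚ) - k) ^ 2 / ((Fintype.card G₂ : ℚ) - 1))⌉
        + (k : ℤ) ^ 2 - (Fintype.card G₁ : ℤ) * ((Fintype.card G₁ : ℤ) - 1) ≤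
      2 * (ambiguity F : ℤ) := by
  classical
  set n₁ := Fintype.card G₁ with hn₁
  set n₂ := Fintype.card G₂ with hn₂
  set s : Finset G₁ := univ.filter (fun a : G₁ => a ≠ 0) with hs
  set S : G₁ → ℤ := fun a => ∑ b : G₂, ((deltaF F a b : ℤ)) ^ 2 with hS
  -- the inner sum of ambiguity, doubled
  have key1 : ∀ a : G₁, 2 * (∑ b : G₂, ((deltaF F a b).choose 2) : ℤ) = S a - n₁ := by
    intro a
    have h2 : ((∑ b : G₂, deltaF F a b : ℕ) : ℤ) = (n₁ : ℤ) := by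
      exact_mod_cast congrArg (Nat.cast (R := ℤ)) (sum_deltaF F a)
    push_cast at h2 ⊢
    rw [Finset.mul_sum]
    calc ∑ b : G₂, 2 * ((deltaF F a b).choose 2 : ℤ)
        = ∑ b : G₂, (((deltaF F a b : ℤ)) ^ 2 - (deltaF F a b : ℤ)) := by
          refine Finset.sum_congr rfl fun b _ => ?_
          have := two_mul_choose_two' (deltaF F a b)
          push_cast at this ⊢
          linarith
      _ = S a - n₁ := by
          rw [Finset.sum_sub_distrib, h2]
  -- existence of maximizing a, b
  obtain ⟨a0, ha0⟩ := Fintype.exists_ne_of_one_lt_card h₁ (0 : G₁)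
  have hsne : s.Nonempty := ⟨a0, by simp [hs, ha0]⟩
  obtain ⟨A, hA, hAsup⟩ := Finset.exists_mem_eq_sup s hsne
    (fun a => univ.sup fun b : G₂ => deltaF F a b)
  have huniv : (univ : Finset G₂).Nonempty := univ_nonempty
  obtain ⟨B, _, hBsup⟩ := Finset.exists_mem_eq_sup (univ : Finset G₂) huniv (deltaF F A)
  have hkAB : k = deltaF F A B := by rw [hk, diffUnif, ← hs, hAsup, hBsup]
  have hkn : k ≤ n₁ := by
    rw [hkAB, deltaF, hn₁, ← Finset.card_univ]
    exact Finset.card_filter_le _ _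
  have hn₂posQ : (0 : ℚ) < (n₂ : ℚ) := by positivity
  have hn₂1posQ : (0 : ℚ) < (n₂ : ℚ) - 1 := by
    have : (2 : ℚ) ≤ (n₂ : ℚ) := by exact_mod_cast h₂
    linarith
  -- generic Cauchy-Schwarz bound
  have key2 : ∀ a : G₁, (⌈((n₁ : ℚ) ^ 2 / (n₂ : ℚ))⌉ : ℤ) ≤ S a := by
    intro a
    rw [Int.ceil_le]
    rw [div_le_iff₀ hn₂posQ]
    have hcs := sq_sum_le_card_mul_sum_sq (s := (univ : Finset G₂))
      (f := fun b => ((deltaF F a b : ℚ)))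
    have hsum : (∑ b : G₂, ((deltaF F a b : ℚ))) = (n₁ : ℚ) := by
      exact_mod_cast congrArg (Nat.cast (R := ℚ)) (sum_deltaF F a)
    rw [hsum, Finset.card_univ, ← hn₂] at hcs
    have hScast : ((S a : ℤ) : ℚ) = ∑ b : G₂, ((deltaF F a b : ℚ)) ^ 2 := by
      rw [hS]; push_cast; ring_nf
    rw [hScast]
    calc (n₁ : ℚ) ^ 2 ≤ (n₂ : ℚ) * ∑ b : G₂, ((deltaF F a b : ℚ)) ^ 2 := hcs
      _ = (∑ b : G₂, ((deltaF F a b : ℚ)) ^ 2) * (n₂ : ℚ) := by ring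
  -- sharper bound at A
  have key3 : (⌈(((n₁ : ℚ) - k) ^ 2 / ((n₂ : ℚ) - 1))⌉ : ℤ) + (k : ℤ) ^ 2 ≤ S A := by
    have hsplit : S A = (k : ℤ) ^ 2 + ∑ b ∈ univ.erase B, ((deltaF F A b : ℤ)) ^ 2 := by
      show (∑ b : G₂, ((deltaF F A b : ℤ)) ^ 2) = _
      rw [← Finset.add_sum_erase _ _ (mem_univ B), ← hkAB]
    have hsum' : ∑ b ∈ univ.erase B, deltaF F A b = n₁ - k := by
      have h := sum_deltaF F A
      rw [← Finset.add_sum_erase _ _ (mem_univ B), ← hkAB] at h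
      omega
    have hceil : (⌈(((n₁ : ℚ) - k) ^ 2 / ((n₂ : ℚ) - 1))⌉ : ℤ) ≤
        ∑ b ∈ univ.erase B, ((deltaF F A b : ℤ)) ^ 2 := by
      rw [Int.ceil_le, div_le_iff₀ hn₂1posQ]
      have hcs := sq_sum_le_card_mul_sum_sq (s := univ.erase B)
        (f := fun b => ((deltaF F A b : ℚ)))
      have hcard : ((univ.erase B).card : ℚ) = (n₂ : ℚ) - 1 := by
        rw [Finset.card_erase_of_mem (mem_univ B), Finset.card_univ, ← hn₂]
        have : 1 ≤ n₂ := by omega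
        push_cast [this]
        ring
      have hsumq : (∑ b ∈ univ.erase B, ((deltaF F A b : ℚ))) = (n₁ : ℚ) - k := by
        rw [← Nat.cast_sub hkn, ← hsum']
        push_cast
        rfl
      rw [hsumq, hcard] at hcs
      have hScast : ((∑ b ∈ univ.erase B, ((deltaF F A b : ℤ)) ^ 2 : ℤ) : ℚ) =
          ∑ b ∈ univ.erase B, ((deltaF F A b : ℚ)) ^ 2 := by push_cast; ring_nf
      rw [hScast]
      calc ((n₁ : ℚ) - k) ^ 2 ≤ ((n₂ : ℚ) - 1) * ∑ b ∈ univ.erase B, ((deltaF F A b : ℚ)) ^ 2 :=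
            hcs
        _ = (∑ b ∈ univ.erase B, ((deltaF F A b : ℚ)) ^ 2) * ((n₂ : ℚ) - 1) := by ring
    linarith [hsplit, hceil]
  -- put the pieces together
  set C1 : ℤ := ⌈((n₁ : ℚ) ^ 2 / (n₂ : ℚ))⌉ with hC1
  set C2 : ℤ := ⌈(((n₁ : ℚ) - k) ^ 2 / ((n₂ : ℚ) - 1))⌉ with hC2
  have hcards : s.card = n₁ - 1 := by
    rw [hs, Finset.filter_ne', Finset.card_erase_of_mem (mem_univ 0), Finset.card_univ]
  have hcarde : ((s.erase A).card : ℤ) = (n₁ : ℤ) - 2 := by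
    rw [Finset.card_erase_of_mem hA, hcards]
    have : 2 ≤ n₁ := h₁
    push_cast [Nat.sub_sub]
    omega
  have hmain : 2 * (ambiguity F : ℤ) = ∑ a ∈ s, (S a - n₁) := by
    rw [ambiguity, ← hs]
    push_cast
    rw [Finset.mul_sum]
    refine Finset.sum_congr rfl fun a _ => ?_
    have := key1 a
    push_cast at this ⊢
    linarith
  rw [hmain, ← Finset.add_sum_erase _ _ hA]
  have hbound1 : (C2 + (k : ℤ) ^ 2) - n₁ ≤ S A - n₁ := by
    linarith [key3]
  have hbound2 : ((n₁ : ℤ) - 2) * (C1 - n₁) ≤ ∑ a ∈ s.erase A, (S a - n₁) := by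
    have h := Finset.card_nsmul_le_sum (s.erase A) (fun a => S a - (n₁ : ℤ)) (C1 - n₁)
      (fun a _ => by have := key2 a; linarith)
    rw [nsmul_eq_mul, hcarde] at h
    exact h
  have hfinal : ((n₁ : ℤ) - 2) * C1 + C2 + (k : ℤ) ^ 2 - (n₁ : ℤ) * ((n₁ : ℤ) - 1)
      = ((C2 + (k : ℤ) ^ 2) - n₁) + ((n₁ : ℤ) - 2) * (C1 - n₁) := by ring
  rw [hfinal]
  exact add_le_add hbound1 hbound2
end

section
/- Let G₁ and G₂ be finite abelian groups, let 1 ≤ i < j be integers, and let F : G₁ → G₂ be a function such that δ_F(a,b) ∈ {0, i, j} for every a ∈ G₁ with a ≠ 0 and every b ∈ G₂. Then 2·𝒜(F) = i·j·𝒟(F) + (i + j − 1)·|G₁|·(|G₁| − 1) − i·j·|G₂|·(|G₁| − 1), as an identity of integers. -/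
open Finset

/-- The deficiency `𝒟(F) = |{(a,b) : a ≠ 0, δ_F(a,b) = 0}|`. -/
def deficiency {G₁ G₂ : Type*} [AddCommGroup G₁] [Fintype G₁] [DecidableEq G₁]
    [AddCommGroup G₂] [Fintype G₂] [DecidableEq G₂] (F : G₁ → G₂) : ℕ :=
  (univ.filter fun p : G₁ × G₂ => p.1 ≠ 0 ∧ deltaF F p.1 p.2 = 0).card

lemma two_mul_choose_two_int (n : ℕ) : (2 * n.choose 2 : ℤ) = n * (n - 1) := by
  induction n with
  | zero => simp
  | succ n ih =>
    rw [Nat.choose_succ_succ, Nat.choose_one_right]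
    push_cast at ih ⊢
    linear_combination ih

lemma deficiency_eq_sum {G₁ G₂ : Type*} [AddCommGroup G₁] [Fintype G₁] [DecidableEq G₁]
    [AddCommGroup G₂] [Fintype G₂] [DecidableEq G₂] (F : G₁ → G₂) :
    (deficiency F : ℤ) =
      ∑ a ∈ univ.filter (fun a : G₁ => a ≠ 0), ∑ b : G₂,
        (if deltaF F a b = 0 then (1 : ℤ) else 0) := by
  rw [deficiency]
  push_cast [Finset.card_filter]
  rw [Fintype.sum_prod_type]
  rw [Finset.sum_filter]
  apply Finset.sum_congr rfl
  intro a _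
  by_cases ha : a = 0 <;> simp [ha]

theorem ambiguity_deficiency_of_three_valued_spectrum {G₁ G₂ : Type*}
    [AddCommGroup G₁] [Fintype G₁] [DecidableEq G₁]
    [AddCommGroup G₂] [Fintype G₂] [DecidableEq G₂]
    (i j : ℕ) (hi : 1 ≤ i) (hij : i < j) (F : G₁ → G₂)
    (h : ∀ a : G₁, a ≠ 0 → ∀ b : G₂,
      deltaF F a b = 0 ∨ deltaF F a b = i ∨ deltaF F a b = j) :
    2 * (ambiguity F : ℤ) =
      (i : ℤ) * (j : ℤ) * (deficiency F : ℤ)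
        + ((i : ℤ) + (j : ℤ) - 1) * (Fintype.card G₁ : ℤ) * ((Fintype.card G₁ : ℤ) - 1)
        - (i : ℤ) * (j : ℤ) * (Fintype.card G₂ : ℤ) * ((Fintype.card G₁ : ℤ) - 1) := by
  have hcard : ((univ.filter (fun a : G₁ => a ≠ 0)).card : ℤ)
      = (Fintype.card G₁ : ℤ) - 1 := by
    rw [Finset.filter_ne' univ (0 : G₁), Finset.card_erase_of_mem (Finset.mem_univ _),
      Finset.card_univ, Nat.cast_sub Fintype.card_pos, Nat.cast_one]
  have key : ∀ a ∈ univ.filter (fun a : G₁ => a ≠ 0), ∀ b : G₂,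
      (2 * (deltaF F a b).choose 2 : ℤ)
        = (i : ℤ) * j * (if deltaF F a b = 0 then 1 else 0)
          + ((i : ℤ) + j - 1) * (deltaF F a b) - (i : ℤ) * j := by
    intro a ha b
    rcases h a (Finset.mem_filter.mp ha).2 b with h0 | h0 | h0 <;>
      rw [two_mul_choose_two_int, h0]
    · simp
    · have : i ≠ 0 := by omega
      simp only [this, if_false]
      ring
    · have : j ≠ 0 := by omega
      simp only [this, if_false]
      ring
  have hsumδ : ∑ a ∈ univ.filter (fun a : G₁ => a ≠ 0), ∑ b : G₂,
      ((deltaF F a b : ℤ)) = ((Fintype.card G₁ : ℤ) - 1) * Fintype.card G₁ := by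
    rw [Finset.sum_congr rfl (fun a _ => by
      rw [← Nat.cast_sum, sum_deltaF F a]),
      Finset.sum_const, nsmul_eq_mul, hcard]
  calc 2 * (ambiguity F : ℤ)
      = ∑ a ∈ univ.filter (fun a : G₁ => a ≠ 0), ∑ b : G₂,
          (2 * (deltaF F a b).choose 2 : ℤ) := by
        rw [ambiguity]; push_cast [Finset.mul_sum]; rfl
    _ = ∑ a ∈ univ.filter (fun a : G₁ => a ≠ 0), ∑ b : G₂,
          ((i : ℤ) * j * (if deltaF F a b = 0 then 1 else 0)
            + ((i : ℤ) + j - 1) * (deltaF F a b) - (i : ℤ) * j) := by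
        exact Finset.sum_congr rfl fun a ha =>
          Finset.sum_congr rfl fun b _ => key a ha b
    _ = (i : ℤ) * j * (deficiency F : ℤ)
          + ((i : ℤ) + j - 1) * (((Fintype.card G₁ : ℤ) - 1) * Fintype.card G₁)
          - (i : ℤ) * j * (((Fintype.card G₁ : ℤ) - 1) * Fintype.card G₂) := by
        simp only [Finset.sum_sub_distrib, Finset.sum_add_distrib, ← Finset.mul_sum,
          Finset.sum_const, nsmul_eq_mul, Finset.card_univ, hcard,
          ← deficiency_eq_sum, hsumδ]
        ring
    _ = _ := by ring
end

section
/- Let n, m ≥ 1 and let F : 𝔽₂ⁿ → 𝔽₂ᵐ be a function with differential uniformity k = Δ_F, and let N_k = |{(a,b) : a ∈ 𝔽₂ⁿ, a ≠ 0, b ∈ 𝔽₂ᵐ, δ_F(a,b) = k}|. Then 2·𝒜(F) ≥ (k² − 2k)·N_k + (2ⁿ − 1)·2ⁿ, with equality if and only if δ_F(a,b) ∈ {0, 2, k} for every a ≠ 0 and every b. -/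
open Finset

/-- A finset invariant under a fixed-point-free involution has even cardinality. -/
lemma even_card_of_involution {α : Type*} [DecidableEq α] (ι : α → α)
    (hinv : ∀ x, ι (ι x) = x) :
    ∀ s : Finset α, (∀ x ∈ s, ι x ∈ s) → (∀ x ∈ s, ι x ≠ x) → Even s.card := by
  intro s
  induction s using Finset.strongInduction with
  | _ s ih =>
    intro hmem hne
    rcases s.eq_empty_or_nonempty with rfl | ⟨x, hx⟩
    · simp
    have hx' : ι x ∈ s := hmem x hx
    have hsub : ({x, ι x} : Finset α) ⊆ s := by
      intro y hy
      simp only [Finset.mem_insert, Finset.mem_singleton] at hy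
      rcases hy with rfl | rfl <;> assumption
    have hcard2 : ({x, ι x} : Finset α).card = 2 := by
      rw [Finset.card_insert_of_notMem (by simp [(hne x hx).symm]), Finset.card_singleton]
    have hss : s \ {x, ι x} ⊂ s := Finset.sdiff_ssubset hsub ⟨x, by simp⟩
    have hE : Even (s \ ({x, ι x} : Finset α)).card := by
      refine ih _ hss ?_ ?_
      · intro y hy
        simp only [Finset.mem_sdiff, Finset.mem_insert, Finset.mem_singleton, not_or] at hy ⊢
        exact ⟨hmem y hy.1, fun h => hy.2.2 (by rw [← h, hinv]),
          fun h => hy.2.1 (by rw [← hinv y, h, hinv])⟩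
      · intro y hy
        exact hne y (Finset.mem_sdiff.1 hy).1
    have hcard : s.card = (s \ ({x, ι x} : Finset α)).card + 2 := by
      rw [Finset.card_sdiff_of_subset hsub, hcard2]
      have h2 : 2 ≤ s.card := hcard2 ▸ Finset.card_le_card hsub
      omega
    obtain ⟨r, hr⟩ := hE
    exact ⟨r + 1, by omega⟩

/-- In characteristic two, each `δ_F(a,b)` with `a ≠ 0` is even. -/
lemma deltaF_even {n m : ℕ} (F : (Fin n → ZMod 2) → (Fin m → ZMod 2))
    {a : Fin n → ZMod 2} (ha : a ≠ 0) (b : Fin m → ZMod 2) : Even (deltaF F a b) := by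
  have haa : ∀ v : Fin n → ZMod 2, v + a + a = v := by
    intro v
    funext i
    simp [add_assoc, CharTwo.add_self_eq_zero]
  refine even_card_of_involution (fun x => x + a) haa _ ?_ ?_
  · intro x hx
    simp only [Finset.mem_filter, Finset.mem_univ, true_and] at hx ⊢
    rw [haa]
    have : F x - F (x + a) = -(F (x + a) - F x) := by ring
    have hneg : ∀ w : Fin m → ZMod 2, -w = w := by
      intro w; funext i; exact CharTwo.neg_eq _
    rw [this, hx, hneg]
  · intro x _ h
    exact ha (by simpa using congrArg (fun v => v - x) h)

lemma sum_deltaF_s13 {n m : ℕ} (F : (Fin n → ZMod 2) → (Fin m → ZMod 2))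
    (a : Fin n → ZMod 2) : ∑ b : Fin m → ZMod 2, deltaF F a b = 2 ^ n := by
  have : (univ : Finset (Fin n → ZMod 2)).card =
      ∑ b : Fin m → ZMod 2, deltaF F a b :=
    Finset.card_eq_sum_card_fiberwise (f := fun x => F (x + a) - F x)
      (fun x _ => Finset.mem_univ _)
  rw [← this, Finset.card_univ]
  simp [ZMod.card]

lemma deltaF_le_diffUnif {n m : ℕ} (F : (Fin n → ZMod 2) → (Fin m → ZMod 2))
    {a : Fin n → ZMod 2} (ha : a ≠ 0) (b : Fin m → ZMod 2) :
    deltaF F a b ≤ diffUnif F := by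
  have h1 : deltaF F a b ≤ univ.sup (fun b => deltaF F a b) :=
    Finset.le_sup (Finset.mem_univ b)
  have h2 : univ.sup (fun b => deltaF F a b) ≤ diffUnif F :=
    Finset.le_sup (f := fun a => univ.sup fun b : Fin m → ZMod 2 => deltaF F a b)
      (Finset.mem_filter.2 ⟨Finset.mem_univ a, ha⟩)
  exact h1.trans h2

lemma two_mul_choose_two_cast (d : ℕ) : 2 * ((d.choose 2 : ℤ)) = d * (d - 1) := by
  induction d with
  | zero => simp
  | succ d ih =>
    rw [Nat.choose_succ_succ, Nat.choose_one_right]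
    push_cast
    push_cast at ih
    nlinarith [ih]

lemma pointwise_le (k d : ℕ) (hd : Even d) (hdk : d ≤ k) :
    ((k : ℤ) ^ 2 - 2 * k) * (if d = k then 1 else 0) + d ≤ (d : ℤ) * ((d : ℤ) - 1) := by
  by_cases h : d = k
  · subst h
    simp only [eq_self_iff_true, if_true]
    exact le_of_eq (by ring)
  · simp only [if_neg h, zero_mul, mul_zero, zero_add]
    obtain ⟨r, rfl⟩ := hd
    have : (0:ℤ) ≤ r := Int.natCast_nonneg r
    rcases Nat.eq_zero_or_pos r with rfl | hr
    · simp
    · have h1 : (1:ℤ) ≤ r := by exact_mod_cast hr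
      push_cast
      nlinarith

lemma pointwise_eq_iff (k d : ℕ) (hd : Even d) (hdk : d ≤ k) :
    (((k : ℤ) ^ 2 - 2 * k) * (if d = k then 1 else 0) + d = (d : ℤ) * ((d : ℤ) - 1)) ↔
      (d = 0 ∨ d = 2 ∨ d = k) := by
  by_cases h : d = k
  · subst h
    constructor
    · intro _; exact Or.inr (Or.inr rfl)
    · intro _
      simp only [eq_self_iff_true, if_true]
      ring
  · simp only [if_neg h, zero_mul, mul_zero, zero_add]
    constructor
    · intro heq
      have heq' : (d : ℤ) * d = 2 * d := by nlinarith
      have heqn : d * d = 2 * d := by exact_mod_cast heq'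
      rcases Nat.eq_zero_or_pos d with rfl | hp
      · exact Or.inl rfl
      · refine Or.inr (Or.inl ?_)
        exact Nat.eq_of_mul_eq_mul_right hp heqn
    · rintro (rfl | rfl | rfl)
      · simp
      · norm_num
      · exact absurd rfl h

theorem ambiguity_lower_bound_boolean {n m : ℕ} (hn : 1 ≤ n) (hm : 1 ≤ m)
    (F : (Fin n → ZMod 2) → (Fin m → ZMod 2)) (k : ℕ) (hk : k = diffUnif F)
    (Nk : ℕ)
    (hNk : Nk = (univ.filter fun p : (Fin n → ZMod 2) × (Fin m → ZMod 2) =>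
      p.1 ≠ 0 ∧ deltaF F p.1 p.2 = k).card) :
    (((k : ℤ) ^ 2 - 2 * (k : ℤ)) * (Nk : ℤ) + (2 ^ n - 1) * 2 ^ n ≤ 2 * (ambiguity F : ℤ)) ∧
      (2 * (ambiguity F : ℤ) = ((k : ℤ) ^ 2 - 2 * (k : ℤ)) * (Nk : ℤ) + (2 ^ n - 1) * 2 ^ n ↔
        ∀ a : Fin n → ZMod 2, a ≠ 0 → ∀ b : Fin m → ZMod 2,
          deltaF F a b = 0 ∨ deltaF F a b = 2 ∨ deltaF F a b = k) := by
  classical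
  set A : Finset (Fin n → ZMod 2) := univ.filter (fun a => a ≠ 0) with hA
  -- card of A
  have hcardA : (A.card : ℤ) = 2 ^ n - 1 := by
    have : A = (univ : Finset (Fin n → ZMod 2)).erase 0 := Finset.filter_ne' _ _
    rw [this, Finset.card_erase_of_mem (Finset.mem_univ _), Finset.card_univ]
    have hc : Fintype.card (Fin n → ZMod 2) = 2 ^ n := by simp [ZMod.card]
    rw [hc]
    have : 1 ≤ 2 ^ n := Nat.one_le_two_pow
    push_cast [this]
    ring
  -- N_k as a double sum
  have hNk' : (Nk : ℤ) = ∑ a ∈ A, ∑ b : Fin m → ZMod 2,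
      (if deltaF F a b = k then (1:ℤ) else 0) := by
    rw [hNk, Finset.card_filter]
    push_cast
    rw [Fintype.sum_prod_type, hA, Finset.sum_filter]
    refine Finset.sum_congr rfl fun a _ => ?_
    by_cases ha : a = 0 <;> simp [ha]
  -- sum of deltas
  have hsumδ : ∑ a ∈ A, ∑ b : Fin m → ZMod 2, ((deltaF F a b : ℤ)) =
      (2 ^ n - 1) * 2 ^ n := by
    have : ∀ a ∈ A, ∑ b : Fin m → ZMod 2, ((deltaF F a b : ℤ)) = (2:ℤ) ^ n := by
      intro a _
      rw [← Nat.cast_sum, sum_deltaF_s13]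
      push_cast
      ring
    rw [Finset.sum_congr rfl this, Finset.sum_const, nsmul_eq_mul, hcardA]
  -- LHS as a double sum
  have hL : ((k : ℤ) ^ 2 - 2 * (k : ℤ)) * (Nk : ℤ) + (2 ^ n - 1) * 2 ^ n =
      ∑ a ∈ A, ∑ b : Fin m → ZMod 2,
        (((k : ℤ) ^ 2 - 2 * k) * (if deltaF F a b = k then 1 else 0) + (deltaF F a b : ℤ)) := by
    simp only [Finset.sum_add_distrib, ← Finset.mul_sum]
    rw [← hNk', ← hsumδ]
  -- RHS as a double sum
  have hR : 2 * (ambiguity F : ℤ) =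
      ∑ a ∈ A, ∑ b : Fin m → ZMod 2, ((deltaF F a b : ℤ)) * ((deltaF F a b : ℤ) - 1) := by
    rw [ambiguity]
    push_cast
    rw [Finset.mul_sum]
    refine Finset.sum_congr rfl fun a _ => ?_
    rw [Finset.mul_sum]
    exact Finset.sum_congr rfl fun b _ => two_mul_choose_two_cast _
  -- pointwise inequality
  have hpt : ∀ a ∈ A, ∀ b : Fin m → ZMod 2,
      ((k : ℤ) ^ 2 - 2 * k) * (if deltaF F a b = k then 1 else 0) + (deltaF F a b : ℤ) ≤
        ((deltaF F a b : ℤ)) * ((deltaF F a b : ℤ) - 1) := by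
    intro a ha b
    have ha' : a ≠ 0 := (Finset.mem_filter.1 ha).2
    exact pointwise_le k _ (deltaF_even F ha' b) (hk ▸ deltaF_le_diffUnif F ha' b)
  have hinner_le : ∀ a ∈ A,
      ∑ b : Fin m → ZMod 2,
        (((k : ℤ) ^ 2 - 2 * k) * (if deltaF F a b = k then 1 else 0) + (deltaF F a b : ℤ)) ≤
      ∑ b : Fin m → ZMod 2, ((deltaF F a b : ℤ)) * ((deltaF F a b : ℤ) - 1) := by
    intro a ha
    exact Finset.sum_le_sum fun b _ => hpt a ha b
  constructor
  · rw [hL, hR]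
    exact Finset.sum_le_sum hinner_le
  · rw [hL, hR, eq_comm, Finset.sum_eq_sum_iff_of_le hinner_le]
    constructor
    · intro H a ha b
      have haA : a ∈ A := Finset.mem_filter.2 ⟨Finset.mem_univ a, ha⟩
      have := (Finset.sum_eq_sum_iff_of_le (fun b _ => hpt a haA b)).1 (H a haA) b
        (Finset.mem_univ b)
      exact (pointwise_eq_iff k _ (deltaF_even F ha b)
        (hk ▸ deltaF_le_diffUnif F ha b)).1 this
    · intro H a haA
      have ha : a ≠ 0 := (Finset.mem_filter.1 haA).2
      rw [Finset.sum_eq_sum_iff_of_le (fun b _ => hpt a haA b)]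
      intro b _
      exact (pointwise_eq_iff k _ (deltaF_even F ha b)
        (hk ▸ deltaF_le_diffUnif F ha b)).2 (H a ha b)
end

section
/- Let n ≥ 1 and let F : 𝔽₂ⁿ → 𝔽₂ⁿ be any function. Then the ambiguity satisfies 𝒜(F) ≥ (2ⁿ − 1)·2ⁿ⁻¹, with equality if and only if F is APN (i.e., Δ_F ≤ 2). -/
open Finset

/-- A finset closed under a fixed-point-free involution has even cardinality. -/
lemma even_card_of_invol {α : Type*} [DecidableEq α] (s : Finset α) (f : α → α)
    (hmem : ∀ x ∈ s, f x ∈ s) (hinv : ∀ x, f (f x) = x) (hne : ∀ x, f x ≠ x) :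
    Even s.card := by
  induction s using Finset.strongInduction with
  | _ s ih =>
    rcases s.eq_empty_or_nonempty with rfl | ⟨x, hx⟩
    · simp
    · have hfx : f x ∈ s := hmem x hx
      have hfxne : f x ≠ x := hne x
      set t := (s.erase x).erase (f x) with ht
      have htsub : t ⊂ s := by
        refine Finset.ssubset_of_subset_of_ssubset ?_ (Finset.erase_ssubset hx)
        exact Finset.erase_subset _ _
      have htmem : ∀ y ∈ t, f y ∈ t := by
        intro y hy
        have hy1 : y ≠ f x := Finset.ne_of_mem_erase hy
        have hy2 : y ≠ x := Finset.ne_of_mem_erase (Finset.mem_of_mem_erase hy)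
        have hys : y ∈ s := Finset.mem_of_mem_erase (Finset.mem_of_mem_erase hy)
        have h1 : f y ≠ f x := fun h => hy2 (by rw [← hinv y, h, hinv])
        have h2 : f y ≠ x := fun h => hy1 (by rw [← hinv y, h])
        exact Finset.mem_erase.mpr ⟨h1, Finset.mem_erase.mpr ⟨h2, hmem y hys⟩⟩
      have hcard : s.card = t.card + 2 := by
        have h1 : f x ∈ s.erase x := Finset.mem_erase.mpr ⟨hfxne, hfx⟩
        have hc1 : (s.erase x).card = s.card - 1 := Finset.card_erase_of_mem hx
        have hc2 : t.card = (s.erase x).card - 1 := Finset.card_erase_of_mem h1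
        have hp1 : 1 ≤ (s.erase x).card := Finset.card_pos.mpr ⟨f x, h1⟩
        have hp2 : 1 ≤ s.card := Finset.card_pos.mpr ⟨x, hx⟩
        omega
      obtain ⟨k, hk⟩ := ih t htsub htmem
      exact ⟨k + 1, by omega⟩

lemma choose_two_mul_eq (d : ℕ) : 2 * d.choose 2 = d * (d - 1) := by
  rw [Nat.choose_two_right, Nat.mul_div_cancel']
  rcases Nat.even_or_odd d with ⟨m, rfl⟩ | ⟨m, rfl⟩
  · exact Dvd.dvd.mul_right ⟨m, by omega⟩ _
  · exact Dvd.dvd.mul_left ⟨m, by omega⟩ _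

lemma point_ineq (d : ℕ) (hd : Even d) : d ≤ d * (d - 1) ∧ (d * (d - 1) = d ↔ d ≤ 2) := by
  obtain ⟨m, rfl⟩ := hd
  rcases m with _ | _ | m
  · simp
  · norm_num
  · have e2 : m + 2 + (m + 2) = 2 * m + 4 := by omega
    have e : 2 * m + 4 - 1 = 2 * m + 3 := by omega
    rw [e2, e]
    refine ⟨by nlinarith, ?_, ?_⟩
    · intro h; exfalso; nlinarith
    · intro h; omega

theorem ambiguity_ge_APN_bound {n : ℕ} (hn : 1 ≤ n)
    (F : (Fin n → ZMod 2) → (Fin n → ZMod 2)) :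
    (2 ^ n - 1) * 2 ^ (n - 1) ≤ ambiguity F ∧
      (ambiguity F = (2 ^ n - 1) * 2 ^ (n - 1) ↔ diffUnif F ≤ 2) := by
  have hz : ∀ z : ZMod 2, z + z = 0 := by decide
  have hnz : ∀ z : ZMod 2, -z = z := by decide
  have haa : ∀ v : (Fin n → ZMod 2), v + v = 0 := fun v => funext fun i => hz (v i)
  have hneg : ∀ v : (Fin n → ZMod 2), -v = v := fun v => funext fun i => hnz (v i)
  have hcardG : Fintype.card (Fin n → ZMod 2) = 2 ^ n := by
    simp [Fintype.card_fun]
  -- each delta is even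
  have heven : ∀ a : (Fin n → ZMod 2), a ≠ 0 → ∀ b : (Fin n → ZMod 2), Even (deltaF F a b) := by
    intro a ha b
    apply even_card_of_invol _ (fun x => x + a)
    · intro x hx
      simp only [Finset.mem_filter, Finset.mem_univ, true_and] at hx ⊢
      rw [add_assoc, haa, add_zero]
      rw [← hx]
      rw [show F x - F (x + a) = -(F (x + a) - F x) by ring, hneg]
    · intro x; rw [add_assoc, haa, add_zero]
    · intro x h
      exact ha (by have := congrArg (· - x) h; simpa using this)
  -- sum of deltas over b is 2^n
  have hsum : ∀ a : (Fin n → ZMod 2), ∑ b : (Fin n → ZMod 2), deltaF F a b = 2 ^ n := by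
    intro a
    have := Finset.card_eq_sum_card_fiberwise
      (f := fun x : (Fin n → ZMod 2) => F (x + a) - F x) (s := Finset.univ) (t := Finset.univ)
      (fun x _ => Finset.mem_univ _)
    rw [Finset.card_univ, hcardG] at this
    exact this.symm
  -- per-a bound
  have hkey : ∀ a : (Fin n → ZMod 2), a ≠ 0 →
      2 ^ (n - 1) ≤ ∑ b : (Fin n → ZMod 2), (deltaF F a b).choose 2 ∧
      ((∑ b : (Fin n → ZMod 2), (deltaF F a b).choose 2) = 2 ^ (n - 1) ↔ ∀ b : (Fin n → ZMod 2), deltaF F a b ≤ 2) := by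
    intro a ha
    have hle : ∀ b ∈ (Finset.univ : Finset (Fin n → ZMod 2)),
        deltaF F a b ≤ deltaF F a b * (deltaF F a b - 1) :=
      fun b _ => (point_ineq _ (heven a ha b)).1
    have h2S : 2 * ∑ b : (Fin n → ZMod 2), (deltaF F a b).choose 2
        = ∑ b : (Fin n → ZMod 2), deltaF F a b * (deltaF F a b - 1) := by
      rw [Finset.mul_sum]
      exact Finset.sum_congr rfl fun b _ => choose_two_mul_eq _
    have hpow : 2 ^ n = 2 * 2 ^ (n - 1) := by
      rw [← pow_succ', Nat.sub_add_cancel hn]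
    have hge : 2 ^ n ≤ 2 * ∑ b : (Fin n → ZMod 2), (deltaF F a b).choose 2 := by
      rw [h2S, ← hsum a]
      exact Finset.sum_le_sum hle
    constructor
    · omega
    · have heq : (∑ b : (Fin n → ZMod 2), (deltaF F a b).choose 2) = 2 ^ (n - 1) ↔
          (∑ b : (Fin n → ZMod 2), deltaF F a b * (deltaF F a b - 1)) = ∑ b : (Fin n → ZMod 2), deltaF F a b := by
        rw [← h2S, hsum a]
        omega
      rw [heq, eq_comm, Finset.sum_eq_sum_iff_of_le hle]
      constructor
      · intro h b
        exact ((point_ineq _ (heven a ha b)).2).mp ((h b (Finset.mem_univ b)).symm)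
      · intro h b _
        exact (((point_ineq _ (heven a ha b)).2).mpr (h b)).symm
  -- the index set
  have hfilt : (Finset.univ.filter (fun a : (Fin n → ZMod 2) => a ≠ 0)).card = 2 ^ n - 1 := by
    rw [Finset.filter_ne', Finset.card_erase_of_mem (Finset.mem_univ _),
      Finset.card_univ, hcardG]
  have hmemne : ∀ a ∈ Finset.univ.filter (fun a : (Fin n → ZMod 2) => a ≠ 0), a ≠ 0 := by
    intro a ha; exact (Finset.mem_filter.mp ha).2
  have hloconst : ∀ a ∈ Finset.univ.filter (fun a : (Fin n → ZMod 2) => a ≠ 0),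
      2 ^ (n - 1) ≤ ∑ b : (Fin n → ZMod 2), (deltaF F a b).choose 2 :=
    fun a ha => (hkey a (hmemne a ha)).1
  have hlow : (2 ^ n - 1) * 2 ^ (n - 1) ≤ ambiguity F := by
    have := Finset.card_nsmul_le_sum _ _ _ hloconst
    rwa [hfilt, smul_eq_mul] at this
  refine ⟨hlow, ?_⟩
  have hconstsum : ∑ _a ∈ Finset.univ.filter (fun a : (Fin n → ZMod 2) => a ≠ 0), 2 ^ (n - 1)
      = (2 ^ n - 1) * 2 ^ (n - 1) := by
    rw [Finset.sum_const, hfilt, smul_eq_mul]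
  rw [ambiguity, ← hconstsum, eq_comm, Finset.sum_eq_sum_iff_of_le hloconst]
  rw [diffUnif, Finset.sup_le_iff]
  constructor
  · intro h a ha
    rw [Finset.sup_le_iff]
    intro b _
    exact ((hkey a (hmemne a ha)).2).mp (h a ha).symm b
  · intro h a ha
    refine (((hkey a (hmemne a ha)).2).mpr ?_).symm
    intro b
    exact Finset.sup_le_iff.mp (h a ha) b (Finset.mem_univ b)
end

section
/- Let n ≥ 1 and let F : 𝔽₂ⁿ → 𝔽₂ⁿ be any function. Then the deficiency satisfies 𝒟(F) ≥ (2ⁿ − 1)·2ⁿ⁻¹, with equality if and only if F is APN (i.e., Δ_F ≤ 2). -/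
open Finset

section Aux
variable {n : ℕ}

lemma aux_self_add_self (v : Fin n → ZMod 2) : v + v = 0 := by
  funext i
  have h : ∀ x : ZMod 2, x + x = 0 := by decide
  exact h (v i)

lemma aux_even_delta (F : (Fin n → ZMod 2) → (Fin n → ZMod 2)) {a : Fin n → ZMod 2}
    (ha : a ≠ 0) (b : Fin n → ZMod 2) : Even (deltaF F a b) := by
  set S := univ.filter fun x => F (x + a) - F x = b with hS
  have h0 : ∑ _x ∈ S, (1 : ZMod 2) = 0 := by
    refine Finset.sum_involution (fun x _ => x + a) (fun x hx => by decide)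
      (fun x hx _ => ?_) (fun x hx => ?_) (fun x hx => ?_)
    · intro h
      exact ha (by have := congrArg (· - x) h; simpa using this)
    · simp only [hS, mem_filter, mem_univ, true_and] at hx ⊢
      show F (x + a + a) - F (x + a) = b
      rw [add_assoc, aux_self_add_self, add_zero, ← neg_sub, hx]
      funext i
      have h : ∀ x : ZMod 2, -x = x := by decide
      exact h (b i)
    · show x + a + a = x
      rw [add_assoc, aux_self_add_self, add_zero]
  rw [Finset.sum_const, nsmul_eq_mul, mul_one] at h0
  obtain ⟨k, hk⟩ := (ZMod.natCast_eq_zero_iff S.card 2).mp h0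
  exact ⟨k, by show S.card = k + k; omega⟩

lemma aux_sum_delta (F : (Fin n → ZMod 2) → (Fin n → ZMod 2)) (a : Fin n → ZMod 2) :
    ∑ b : Fin n → ZMod 2, deltaF F a b = 2 ^ n := by
  have h := Finset.card_eq_sum_card_fiberwise
    (f := fun x : Fin n → ZMod 2 => F (x + a) - F x) (s := univ) (t := univ)
    (fun x _ => mem_univ _)
  have hc : (univ : Finset (Fin n → ZMod 2)).card = 2 ^ n := by
    simp [Finset.card_univ, Fintype.card_fun]
  rw [hc] at h
  exact h.symm

lemma aux_key (hn : 1 ≤ n) (F : (Fin n → ZMod 2) → (Fin n → ZMod 2))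
    {a : Fin n → ZMod 2} (ha : a ≠ 0) :
    2 ^ (n - 1) ≤ (univ.filter fun b => deltaF F a b = 0).card ∧
      ((univ.filter fun b => deltaF F a b = 0).card = 2 ^ (n - 1) ↔
        ∀ b, deltaF F a b ≤ 2) := by
  set Z := univ.filter fun b : Fin n → ZMod 2 => deltaF F a b = 0 with hZdef
  set N := univ.filter fun b : Fin n → ZMod 2 => ¬ deltaF F a b = 0 with hNdef
  have hZN : Z.card + N.card = 2 ^ n := by
    rw [hZdef, hNdef, Finset.card_filter_add_card_filter_not]
    simp [Finset.card_univ, Fintype.card_fun]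
  have hpow : 2 ^ n = 2 ^ (n - 1) * 2 := by
    rw [← pow_succ]; congr 1; omega
  have hsum : ∑ b ∈ N, deltaF F a b = 2 ^ n := by
    rw [show N = univ.filter (fun b => deltaF F a b ≠ 0) from rfl,
      Finset.sum_filter_ne_zero, aux_sum_delta]
  have hge : ∀ b ∈ N, 2 ≤ deltaF F a b := by
    intro b hb
    simp only [hNdef, mem_filter, mem_univ, true_and] at hb
    obtain ⟨k, hk⟩ := aux_even_delta F ha b
    omega
  have hNle : N.card ≤ 2 ^ (n - 1) := by
    have := Finset.card_nsmul_le_sum N (fun b => deltaF F a b) 2 hge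
    rw [hsum, smul_eq_mul] at this
    omega
  refine ⟨by omega, ?_, ?_⟩
  · intro hZ b
    have hN : N.card = 2 ^ (n - 1) := by omega
    by_contra hb
    push_neg at hb
    have hbN : b ∈ N := by
      simp only [hNdef, mem_filter, mem_univ, true_and]; omega
    have hlt : ∑ _x ∈ N, 2 < ∑ x ∈ N, deltaF F a x :=
      Finset.sum_lt_sum hge ⟨b, hbN, by omega⟩
    rw [Finset.sum_const, smul_eq_mul, hsum, hN] at hlt
    omega
  · intro h
    have heq : ∀ b ∈ N, deltaF F a b = 2 := fun b hb =>
      le_antisymm (h b) (hge b hb)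
    have h2 : ∑ b ∈ N, deltaF F a b = N.card * 2 := by
      rw [Finset.sum_congr rfl heq, Finset.sum_const, smul_eq_mul]
    omega

end Aux

theorem deficiency_ge_APN_bound {n : ℕ} (hn : 1 ≤ n)
    (F : (Fin n → ZMod 2) → (Fin n → ZMod 2)) :
    (2 ^ n - 1) * 2 ^ (n - 1) ≤ deficiency F ∧
      (deficiency F = (2 ^ n - 1) * 2 ^ (n - 1) ↔ diffUnif F ≤ 2) := by
    classical
  set A := (univ : Finset (Fin n → ZMod 2)).filter (fun a => a ≠ 0) with hA
  have hdef : deficiency F = ∑ a ∈ A, (univ.filter fun b => deltaF F a b = 0).card := by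
    rw [deficiency, Finset.card_filter, Fintype.sum_prod_type, Finset.sum_filter]
    refine Finset.sum_congr rfl fun a _ => ?_
    rw [Finset.card_filter]
    by_cases ha : a = 0 <;> simp [ha]
  have hcardA : A.card = 2 ^ n - 1 := by
    rw [hA, Finset.filter_ne', Finset.card_erase_of_mem (mem_univ _), Finset.card_univ]
    simp [Fintype.card_fun]
  have hmem : ∀ a ∈ A, a ≠ 0 := fun a ha => (mem_filter.mp ha).2
  have hlow : (2 ^ n - 1) * 2 ^ (n - 1) ≤ deficiency F := by
    rw [hdef, ← hcardA, ← smul_eq_mul]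
    exact Finset.card_nsmul_le_sum A _ _ fun a ha => (aux_key hn F (hmem a ha)).1
  have hdu : diffUnif F ≤ 2 ↔ ∀ a ∈ A, ∀ b, deltaF F a b ≤ 2 := by
    rw [diffUnif, Finset.sup_le_iff]
    exact forall₂_congr fun a _ => by rw [Finset.sup_le_iff]; simp
  refine ⟨hlow, ?_, ?_⟩
  · intro hD
    rw [hdu]
    intro a ha
    refine ((aux_key hn F (hmem a ha)).2).mp ?_
    by_contra hne
    have hgt : 2 ^ (n - 1) < (univ.filter fun b => deltaF F a b = 0).card :=
      lt_of_le_of_ne (aux_key hn F (hmem a ha)).1 (Ne.symm hne)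
    have hlt : ∑ _x ∈ A, 2 ^ (n - 1) < ∑ a ∈ A, (univ.filter fun b => deltaF F a b = 0).card :=
      Finset.sum_lt_sum (fun x hx => (aux_key hn F (hmem x hx)).1) ⟨a, ha, hgt⟩
    rw [Finset.sum_const, smul_eq_mul, hcardA, ← hdef, hD] at hlt
    omega
  · intro hD
    rw [hdu] at hD
    rw [hdef, Finset.sum_congr rfl (fun a ha => ((aux_key hn F (hmem a ha)).2).mpr (hD a ha)),
      Finset.sum_const, smul_eq_mul, hcardA]
end

section
/- Let n > 2 and m ≥ 1 be integers such that either n is odd and m < n, or n is even and n/2 < m < n. Then for every function F : 𝔽₂ⁿ → 𝔽₂ᵐ, the fourth moment of the Walsh transform satisfies Σ_{α ∈ 𝔽₂ⁿ} Σ_{β ∈ 𝔽₂ᵐ} W_F(α,β)⁴ ≥ 2^(4n) + 2^(3n)·(2ᵐ − 1) + 3·2^(n+m+1). -/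
open Finset

/-- The Walsh transform `W_F(α,β) = Σ_x (−1)^(β·F(x) + α·x)` of `F : 𝔽₂ⁿ → 𝔽₂ᵐ`. -/
def walsh {n m : ℕ} (F : (Fin n → ZMod 2) → (Fin m → ZMod 2))
    (α : Fin n → ZMod 2) (β : Fin m → ZMod 2) : ℤ :=
  ∑ x : Fin n → ZMod 2,
    if (∑ i, β i * F x i) + (∑ i, α i * x i) = (0 : ZMod 2) then 1 else -1

abbrev V (n : ℕ) := Fin n → ZMod 2

def chi (c : ZMod 2) : ℤ := if c = 0 then 1 else -1
def dot {k : ℕ} (u v : Fin k → ZMod 2) : ZMod 2 := ∑ i, u i * v i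

lemma chi_add (a b : ZMod 2) : chi (a + b) = chi a * chi b := by revert a b; decide

lemma chi_sum {ι : Type*} (s : Finset ι) (f : ι → ZMod 2) :
    chi (∑ i ∈ s, f i) = ∏ i ∈ s, chi (f i) := by
  induction s using Finset.cons_induction with
  | empty => simp [chi]
  | cons a s ha ih => rw [Finset.sum_cons, Finset.prod_cons, chi_add, ih]

lemma card_V (k : ℕ) : Fintype.card (V k) = 2 ^ k := by
  simp [Fintype.card_fun]

lemma dot_add {k : ℕ} (u v w : Fin k → ZMod 2) : dot u (v + w) = dot u v + dot u w := by
  simp [dot, mul_add, Finset.sum_add_distrib]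

lemma dot_comm {k : ℕ} (u v : Fin k → ZMod 2) : dot u v = dot v u := by
  simp [dot, mul_comm]

lemma dot_zero_left {k : ℕ} (v : Fin k → ZMod 2) : dot 0 v = 0 := by
  simp [dot]

lemma orth {k : ℕ} (c : Fin k → ZMod 2) :
    ∑ α : Fin k → ZMod 2, chi (dot α c) = if c = 0 then 2 ^ k else 0 := by
  have h1 : ∀ d : ZMod 2, (∑ v : ZMod 2, chi (v * d)) = if d = 0 then 2 else 0 := by decide
  calc ∑ α : Fin k → ZMod 2, chi (dot α c)
      = ∑ α : Fin k → ZMod 2, ∏ i, chi (α i * c i) := by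
        simp_rw [dot, chi_sum]
    _ = ∏ i, ∑ v : ZMod 2, chi (v * c i) := by
        rw [Finset.prod_univ_sum, Fintype.piFinset_univ]
    _ = ∏ i, (if c i = 0 then (2:ℤ) else 0) := by simp_rw [h1]
    _ = if c = 0 then 2 ^ k else 0 := by
        by_cases hc : c = 0
        · simp [hc]
        · rw [if_neg hc]
          obtain ⟨i, hi⟩ := Function.ne_iff.mp hc
          exact Finset.prod_eq_zero (Finset.mem_univ i) (by simpa using hi)

lemma vadd_self {k : ℕ} (v : V k) : v + v = 0 := by
  ext i
  have : ∀ c : ZMod 2, c + c = 0 := by decide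
  exact this (v i)

lemma vadd_eq_zero_iff {k : ℕ} (u v : V k) : u + v = 0 ↔ v = u := by
  have h : ∀ a b : ZMod 2, a + b = 0 ↔ b = a := by decide
  rw [funext_iff, funext_iff]
  exact forall_congr' fun i => h (u i) (v i)

noncomputable def Wz {n m : ℕ} (F : V n → V m) (β : V m) : ℤ :=
  ∑ x : V n, chi (dot β (F x))

noncomputable def D {n m : ℕ} (F : V n → V m) (a : V n) (b : V m) : ℤ :=
  ∑ x : V n, if F x + F (x + a) = b then 1 else 0


lemma D_zero {n m : ℕ} (F : V n → V m) (b : V m) :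
    D F 0 b = if b = 0 then 2 ^ n else 0 := by
  rw [D]
  have : ∀ x : V n, F x + F (x + 0) = b ↔ b = 0 := by
    intro x
    rw [add_zero, vadd_self (F x)]
    exact eq_comm
  simp only [this]
  by_cases hb : b = 0 <;> simp [hb, card_V]

lemma Wz_sq {n m : ℕ} (F : V n → V m) (β : V m) :
    (Wz F β) ^ 2 = ∑ a : V n, ∑ b : V m, D F a b * chi (dot β b) := by
  rw [Wz, sq, Finset.sum_mul_sum]
  have h1 : ∀ x y : V n, chi (dot β (F x)) * chi (dot β (F y))
      = chi (dot β (F x + F y)) := by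
    intro x y; rw [dot_add, chi_add]
  simp only [h1]
  have h2 : ∀ x : V n, (∑ y : V n, chi (dot β (F x + F y)))
      = ∑ a : V n, chi (dot β (F x + F (x + a))) := by
    intro x
    exact (Fintype.sum_equiv (Equiv.addLeft x)
      (fun a => chi (dot β (F x + F (x + a))))
      (fun y => chi (dot β (F x + F y))) (fun a => rfl)).symm
  simp only [h2]
  rw [Finset.sum_comm]
  refine Finset.sum_congr rfl fun a _ => ?_
  have h3 : ∀ x : V n, chi (dot β (F x + F (x + a)))
      = ∑ b : V m, (if F x + F (x + a) = b then (1:ℤ) else 0) * chi (dot β b) := by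
    intro x
    rw [Finset.sum_eq_single (F x + F (x + a))]
    · simp
    · intro b _ hb; simp [Ne.symm hb]
    · intro h; exact absurd (Finset.mem_univ _) h
  simp only [h3]
  rw [Finset.sum_comm]
  refine Finset.sum_congr rfl fun b _ => ?_
  rw [D, Finset.sum_mul]

lemma Wz_sq_of_balanced {n m : ℕ} (F : V n → V m) (μ : ℤ)
    (H : ∀ a : V n, a ≠ 0 → ∀ b : V m, D F a b = μ)
    (β : V m) (hβ : β ≠ 0) : (Wz F β) ^ 2 = 2 ^ n := by
  rw [Wz_sq]
  rw [← Finset.add_sum_erase (univ : Finset (V n))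
    (fun a => ∑ b : V m, D F a b * chi (dot β b)) (Finset.mem_univ 0)]
  have hzero : (∑ b : V m, D F 0 b * chi (dot β b)) = 2 ^ n := by
    have : ∀ b : V m, D F 0 b * chi (dot β b)
        = if b = 0 then 2 ^ n * chi (dot β b) else 0 := by
      intro b
      rw [D_zero]
      by_cases hb : b = 0 <;> simp [hb]
    simp only [this]
    rw [Finset.sum_ite_eq' (univ : Finset (V m)) 0 (fun b => 2 ^ n * chi (dot β b))]
    simp [dot, chi]
  have hrest : ∀ a ∈ (univ : Finset (V n)).erase 0,
      (∑ b : V m, D F a b * chi (dot β b)) = 0 := by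
    intro a ha
    have ha0 : a ≠ 0 := Finset.ne_of_mem_erase ha
    have : ∀ b : V m, D F a b * chi (dot β b) = μ * chi (dot b β) := by
      intro b; rw [H a ha0 b, dot_comm]
    simp only [this]
    rw [← Finset.mul_sum, orth, if_neg hβ, mul_zero]
  rw [Finset.sum_eq_zero hrest, hzero, add_zero]

lemma fiber_sum {n m : ℕ} (F : V n → V m) :
    ∑ β : V m, Wz F β = 2 ^ m * ∑ x : V n, (if F x = 0 then (1:ℤ) else 0) := by
  rw [show (∑ β : V m, Wz F β) = ∑ x : V n, ∑ β : V m, chi (dot β (F x)) from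
    Finset.sum_comm]
  rw [Finset.mul_sum]
  refine Finset.sum_congr rfl fun x _ => ?_
  rw [orth (F x)]
  by_cases h : F x = 0 <;> simp [h]

lemma Wz_zero {n m : ℕ} (F : V n → V m) : Wz F 0 = 2 ^ n := by
  rw [Wz]
  have : ∀ x : V n, chi (dot (0 : V m) (F x)) = 1 := by
    intro x; rw [dot_zero_left]; rfl
  simp only [this]
  simp [card_V]

lemma sq_ne_two_pow_of_odd {n : ℕ} (hodd : Odd n) (z : ℤ) : z ^ 2 ≠ 2 ^ n := by
  intro h
  have hz : z ≠ 0 := by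
    intro h0; rw [h0] at h
    have : (0:ℤ) < 2 ^ n := by positivity
    simp at h; omega
  have hnat : z.natAbs ^ 2 = 2 ^ n := by
    have := congrArg Int.natAbs h
    rwa [Int.natAbs_pow, Int.natAbs_pow] at this
  have hfac := congrArg (fun t => t.factorization 2) hnat
  simp only [Nat.factorization_pow] at hfac
  simp [Nat.Prime.factorization Nat.prime_two, Finsupp.smul_apply] at hfac
  obtain ⟨j, hj⟩ := hodd
  omega

lemma not_balanced_odd {n m : ℕ} (hodd : Odd n) (hm : 1 ≤ m) (F : V n → V m) (μ : ℤ) :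
    ¬ (∀ a : V n, a ≠ 0 → ∀ b : V m, D F a b = μ) := by
  intro H
  have hβ : (fun _ : Fin m => (1 : ZMod 2)) ≠ 0 := by
    intro h
    have h1 : (1 : ZMod 2) = 0 := congrFun h ⟨0, hm⟩
    exact one_ne_zero h1
  exact sq_ne_two_pow_of_odd hodd _ (Wz_sq_of_balanced F μ H _ hβ)

lemma not_balanced_even {n m : ℕ} (heven : Even n) (hn : 2 < n) (hm : 1 ≤ m)
    (hm2 : n / 2 < m) (F : V n → V m) (μ : ℤ) :
    ¬ (∀ a : V n, a ≠ 0 → ∀ b : V m, D F a b = μ) := by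
  intro H
  obtain ⟨h, hn2⟩ := heven
  have hh1 : 1 ≤ h := by omega
  have hmh : h + 1 ≤ m := by omega
  have hA : ∀ β : V m, β ≠ 0 → Wz F β = 2 ^ h ∨ Wz F β = -(2 ^ h) := by
    intro β hβ
    have hsq : (Wz F β) ^ 2 = 2 ^ n := Wz_sq_of_balanced F μ H β hβ
    have hfac : (Wz F β - 2 ^ h) * (Wz F β + 2 ^ h) = 0 := by
      have h2 : (2:ℤ) ^ n = 2 ^ h * 2 ^ h := by rw [hn2, pow_add]
      linear_combination hsq + h2
    rcases mul_eq_zero.mp hfac with h1 | h1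
    · left; linarith
    · right; linarith
  -- sum over β
  have hfib := fiber_sum F
  rw [← Finset.add_sum_erase (univ : Finset (V m)) (Wz F) (Finset.mem_univ 0),
    Wz_zero] at hfib
  set S := ∑ β ∈ (univ : Finset (V m)).erase 0, Wz F β with hS
  have hdvd1 : (2:ℤ) ^ (h + 1) ∣ S - (2 ^ m - 1) * 2 ^ h := by
    have hcardZ : ((((univ : Finset (V m)).erase 0).card : ℤ)) = 2 ^ m - 1 := by
      rw [Finset.card_erase_of_mem (Finset.mem_univ 0), Finset.card_univ, card_V,
        Nat.cast_sub Nat.one_le_two_pow]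
      push_cast; ring
    have : S - (2 ^ m - 1) * 2 ^ h
        = ∑ β ∈ (univ : Finset (V m)).erase 0, (Wz F β - 2 ^ h) := by
      rw [Finset.sum_sub_distrib, Finset.sum_const, nsmul_eq_mul, hcardZ]
    rw [this]
    refine Finset.dvd_sum fun β hβ => ?_
    rcases hA β (Finset.ne_of_mem_erase hβ) with h1 | h1
    · simp [h1]
    · rw [h1]
      exact ⟨-1, by rw [pow_succ]; ring⟩
  have hdvd2 : (2:ℤ) ^ (h + 1) ∣ 2 ^ m * ∑ x : V n, (if F x = 0 then (1:ℤ) else 0) :=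
    Dvd.dvd.mul_right (pow_dvd_pow 2 hmh) _
  have hdvd3 : (2:ℤ) ^ (h + 1) ∣ 2 ^ n := pow_dvd_pow 2 (by omega)
  have hdvd4 : (2:ℤ) ^ (h + 1) ∣ (2 ^ m - 1) * 2 ^ h := by
    have : (2 ^ m - 1) * 2 ^ h
        = (2 ^ m * ∑ x : V n, (if F x = 0 then (1:ℤ) else 0)) - 2 ^ n
          - (S - (2 ^ m - 1) * 2 ^ h) := by
      rw [← hfib]; ring
    rw [this]
    exact dvd_sub (dvd_sub hdvd2 hdvd3) hdvd1
  have hodd : ¬ ((2:ℤ) ∣ 2 ^ m - 1) := by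
    intro ⟨c, hc⟩
    have h2m : (2:ℤ) ^ m = 2 * 2 ^ (m - 1) := by
      conv_lhs => rw [show m = 1 + (m - 1) by omega]
      rw [pow_add, pow_one]
    omega
  apply hodd
  rw [pow_succ, mul_comm ((2:ℤ) ^ h) 2] at hdvd4
  exact (mul_dvd_mul_iff_right (show (2:ℤ) ^ h ≠ 0 by positivity)).mp hdvd4

lemma walsh_eq {n m : ℕ} (F : V n → V m) (α β) :
    walsh F α β = ∑ x, chi (dot β (F x) + dot α x) := rfl

lemma walsh_pow4 {n m : ℕ} (F : V n → V m) (α β) :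
    (walsh F α β) ^ 4 = ∑ p : (V n × V n) × (V n × V n),
      chi (dot β (F p.1.1 + F p.1.2 + F p.2.1 + F p.2.2)) *
        chi (dot α (p.1.1 + p.1.2 + p.2.1 + p.2.2)) := by
  simp only [Fintype.sum_prod_type]
  rw [walsh_eq]
  have h4 : (∑ x, chi (dot β (F x) + dot α x)) ^ 4
      = (∑ x, chi (dot β (F x) + dot α x)) * ((∑ x, chi (dot β (F x) + dot α x)) *
        ((∑ x, chi (dot β (F x) + dot α x)) * (∑ x, chi (dot β (F x) + dot α x)))) := by ring
  rw [h4]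
  simp only [Finset.mul_sum, Finset.sum_mul]
  refine Finset.sum_congr rfl fun x _ => Finset.sum_congr rfl fun y _ =>
    Finset.sum_congr rfl fun z _ => Finset.sum_congr rfl fun t _ => ?_
  simp only [dot_add, chi_add]
  ring

noncomputable def Nq {n m : ℕ} (F : V n → V m) : ℤ :=
  ∑ p : (V n × V n) × (V n × V n),
    if (p.1.1 + p.1.2 + p.2.1 + p.2.2 = 0 ∧
        F p.1.1 + F p.1.2 + F p.2.1 + F p.2.2 = 0) then 1 else 0


lemma pair_square {n m : ℕ} (g : V n → V m) :
    (∑ x : V n, ∑ z : V n, if g z = g x then (1:ℤ) else 0)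
      = ∑ b : V m, (∑ x : V n, if g x = b then (1:ℤ) else 0) ^ 2 := by
  have point : ∀ x z : V n, (if g z = g x then (1:ℤ) else 0)
      = ∑ b : V m, (if g x = b then (1:ℤ) else 0) * (if g z = b then 1 else 0) := by
    intro x z
    rw [Finset.sum_eq_single (g x)]
    · simp [eq_comm]
    · intro b _ hb; simp [Ne.symm hb]
    · intro h; exact absurd (Finset.mem_univ _) h
  simp only [point]
  have s1 : ∀ x : V n, (∑ z : V n, ∑ b : V m,
      (if g x = b then (1:ℤ) else 0) * (if g z = b then 1 else 0))
      = ∑ b : V m, ∑ z : V n,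
      (if g x = b then (1:ℤ) else 0) * (if g z = b then 1 else 0) := fun _ => Finset.sum_comm
  simp only [s1]
  rw [Finset.sum_comm]
  refine Finset.sum_congr rfl fun b _ => ?_
  simp only [← Finset.mul_sum]
  rw [← Finset.sum_mul, sq]


lemma Nq_eq {n m : ℕ} (F : V n → V m) :
    Nq F = ∑ a : V n, ∑ b : V m, (D F a b) ^ 2 := by
  rw [Nq]
  simp only [Fintype.sum_prod_type]
  -- collapse t
  have stepA : ∀ x y z : V n,
      (∑ t : V n, if (x + y + z + t = 0 ∧ F x + F y + F z + F t = 0) then (1:ℤ) else 0)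
      = if F x + F y + F z + F (x + y + z) = 0 then 1 else 0 := by
    intro x y z
    have pt : ∀ t : V n, (if (x + y + z + t = 0 ∧ F x + F y + F z + F t = 0) then (1:ℤ) else 0)
        = if t = x + y + z then (if F x + F y + F z + F (x + y + z) = 0 then (1:ℤ) else 0)
          else 0 := by
      intro t
      by_cases ht : t = x + y + z
      · subst ht
        simp [vadd_self (x + y + z)]
      · rw [if_neg ht, if_neg]
        rintro ⟨h1, -⟩
        exact ht ((vadd_eq_zero_iff _ _).mp h1)
    simp only [pt]
    rw [Finset.sum_ite_eq' Finset.univ (x + y + z)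
      (fun _ => if F x + F y + F z + F (x + y + z) = 0 then (1:ℤ) else 0)]
    simp
  simp only [stepA]
  -- reindex y = x + a
  have stepB : ∀ x : V n,
      (∑ y : V n, ∑ z : V n, if F x + F y + F z + F (x + y + z) = 0 then (1:ℤ) else 0)
      = ∑ a : V n, ∑ z : V n, if F z + F (z + a) = F x + F (x + a) then (1:ℤ) else 0 := by
    intro x
    rw [← Fintype.sum_equiv (Equiv.addLeft x)
      (fun a => ∑ z : V n, if F x + F (x + a) + F z + F (x + (x + a) + z) = 0 then (1:ℤ) else 0)
      (fun y => ∑ z : V n, if F x + F y + F z + F (x + y + z) = 0 then (1:ℤ) else 0)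
      (fun a => rfl)]
    refine Finset.sum_congr rfl fun a _ => Finset.sum_congr rfl fun z _ => ?_
    have hx : x + (x + a) + z = z + a := by
      rw [← add_assoc, vadd_self, zero_add, add_comm]
    rw [hx]
    have hcond : (F x + F (x + a) + F z + F (z + a) = 0)
        ↔ (F z + F (z + a) = F x + F (x + a)) := by
      rw [add_assoc]; exact vadd_eq_zero_iff _ _
    simp only [hcond]
  simp only [stepB]
  rw [Finset.sum_comm]
  exact Finset.sum_congr rfl fun a _ => pair_square (fun x => F x + F (x + a))


lemma D_sum {n m : ℕ} (F : V n → V m) (a : V n) :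
    ∑ b : V m, D F a b = 2 ^ n := by
  simp only [D]
  rw [Finset.sum_comm]
  have : ∀ x : V n, (∑ b : V m, if F x + F (x + a) = b then (1:ℤ) else 0) = 1 := by
    intro x
    rw [Finset.sum_ite_eq (univ : Finset (V m)) (F x + F (x + a)) (fun _ => (1:ℤ))]
    simp
  simp only [this]
  simp [card_V]


lemma D_even {n m : ℕ} (F : V n → V m) (a : V n) (ha : a ≠ 0) (b : V m) :
    (2 : ℤ) ∣ D F a b := by
  classical
  rw [D, Finset.sum_boole]
  have hnat : 2 ∣ #(filter (fun x => F x + F (x + a) = b) univ) := by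
    rw [← ZMod.natCast_eq_zero_iff]
    have hsum : ((#(filter (fun x => F x + F (x + a) = b) univ) : ZMod 2))
        = ∑ _x ∈ filter (fun x => F x + F (x + a) = b) univ, (1 : ZMod 2) := by
      simp
    rw [hsum]
    refine Finset.sum_involution (fun x _ => x + a) (fun x hx => ?_) (fun x hx h1 => ?_)
      (fun x hx => ?_) (fun x hx => ?_)
    · decide
    · intro hxa
      apply ha
      have := congrArg (fun u => u + x) hxa.symm -- x = x + a → ...
      exact by
        have h2 : x + a = x := hxa
        have h3 : a = 0 := by
          have := congrArg (x + ·) (vadd_self a) -- junk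
          calc a = x + x + a := by rw [vadd_self, zero_add]
            _ = x + (x + a) := by rw [add_assoc]
            _ = x + x := by rw [h2]
            _ = 0 := vadd_self x
        exact h3
    · simp only [Finset.mem_filter, Finset.mem_univ, true_and] at hx ⊢
      have h1 : x + a + a = x := by rw [add_assoc, vadd_self, add_zero]
      rw [h1, add_comm (F (x + a)) (F x)]
      exact hx
    · show x + a + a = x
      rw [add_assoc, vadd_self, add_zero]
  exact_mod_cast hnat

theorem key1 {n m : ℕ} (F : V n → V m) (W : V n → V m → ℤ)
    (walsh_pow4 : ∀ α β, (W α β) ^ 4 = ∑ p : (V n × V n) × (V n × V n),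
      chi (dot β (F p.1.1 + F p.1.2 + F p.2.1 + F p.2.2)) *
        chi (dot α (p.1.1 + p.1.2 + p.2.1 + p.2.2))) :
    ∑ α : V n, ∑ β : V m, (W α β) ^ 4 = 2 ^ (n + m) * Nq F := by
  refine Eq.trans (Finset.sum_congr rfl fun α _ => Finset.sum_congr rfl fun β _ =>
    walsh_pow4 α β) ?_
  have swap1 : ∀ α : V n, (∑ β : V m, ∑ p : (V n × V n) × (V n × V n),
      chi (dot β (F p.1.1 + F p.1.2 + F p.2.1 + F p.2.2)) *
        chi (dot α (p.1.1 + p.1.2 + p.2.1 + p.2.2)))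
      = ∑ p : (V n × V n) × (V n × V n), ∑ β : V m,
      chi (dot β (F p.1.1 + F p.1.2 + F p.2.1 + F p.2.2)) *
        chi (dot α (p.1.1 + p.1.2 + p.2.1 + p.2.2)) := fun α => Finset.sum_comm
  simp only [swap1]
  rw [Finset.sum_comm]
  rw [Nq, Finset.mul_sum]
  refine Finset.sum_congr rfl fun p _ => ?_
  rw [show (∑ α : V n, ∑ β : V m,
      chi (dot β (F p.1.1 + F p.1.2 + F p.2.1 + F p.2.2)) *
        chi (dot α (p.1.1 + p.1.2 + p.2.1 + p.2.2)))
      = (∑ β : V m, chi (dot β (F p.1.1 + F p.1.2 + F p.2.1 + F p.2.2))) *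
        (∑ α : V n, chi (dot α (p.1.1 + p.1.2 + p.2.1 + p.2.2))) from by
    rw [Finset.sum_comm, Finset.sum_mul_sum]]
  rw [orth, orth]
  by_cases h1 : p.1.1 + p.1.2 + p.2.1 + p.2.2 = 0 <;>
    by_cases h2 : F p.1.1 + F p.1.2 + F p.2.1 + F p.2.2 = 0 <;>
    simp [h1, h2, pow_add] <;> ring

lemma sq_ge_four_of_even_ne_zero (z : ℤ) (h2 : 2 ∣ z) (hz : z ≠ 0) : 4 ≤ z ^ 2 := by
  obtain ⟨c, rfl⟩ := h2
  have hc : c ≠ 0 := by rintro rfl; simp at hz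
  have h1 : 1 ≤ |c| := Int.one_le_abs hc
  nlinarith [sq_abs c]

lemma S_zero {n m : ℕ} (F : V n → V m) :
    ∑ b : V m, (D F 0 b) ^ 2 = 2 ^ (2 * n) := by
  have : ∀ b : V m, (D F 0 b) ^ 2 = if b = 0 then 2 ^ (2 * n) else 0 := by
    intro b
    rw [D_zero]
    by_cases hb : b = 0
    · rw [if_pos hb, if_pos hb, ← pow_mul, mul_comm n 2]
    · simp [hb]
  simp only [this]
  rw [Finset.sum_ite_eq' (univ : Finset (V m)) 0 (fun _ => (2:ℤ) ^ (2 * n))]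
  simp

lemma S_decomp {n m k : ℕ} (F : V n → V m) (hmk : m + k = n) (a : V n) :
    ∑ b : V m, (D F a b) ^ 2
      = 2 ^ (n + k) + ∑ b : V m, (D F a b - 2 ^ k) ^ 2 := by
  have h1 : ∀ b : V m, (D F a b - 2 ^ k) ^ 2
      = (D F a b) ^ 2 - (2 * 2 ^ k) * D F a b + 2 ^ k * 2 ^ k := fun b => by ring
  have h2 : ∑ b : V m, (D F a b - 2 ^ k) ^ 2
      = (∑ b : V m, (D F a b) ^ 2) - (2 * 2 ^ k) * 2 ^ n
        + (2 ^ m : ℤ) * (2 ^ k * 2 ^ k) := by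
    simp only [h1]
    rw [Finset.sum_add_distrib, Finset.sum_sub_distrib, ← Finset.mul_sum, D_sum,
      Finset.sum_const, Finset.card_univ, card_V, nsmul_eq_mul]
    push_cast
    ring
  rw [h2]
  have h3 : (2:ℤ) ^ m * (2 ^ k * 2 ^ k) = 2 ^ (n + k) := by
    rw [← pow_add, ← pow_add]; congr 1; omega
  have h4 : (2 * (2:ℤ) ^ k) * 2 ^ n = 2 ^ (n + k) + 2 ^ (n + k) := by
    rw [← pow_succ', ← pow_add]
    rw [show k + 1 + n = n + k + 1 by omega, pow_succ]
    ring
  rw [h3, h4]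
  ring

theorem fourth_moment_walsh_lower_bound {n m : ℕ} (hn : 2 < n) (hm : 1 ≤ m)
    (hnm : (Odd n ∧ m < n) ∨ (Even n ∧ n / 2 < m ∧ m < n))
    (F : (Fin n → ZMod 2) → (Fin m → ZMod 2)) :
    (2 : ℤ) ^ (4 * n) + 2 ^ (3 * n) * (2 ^ m - 1) + 3 * 2 ^ (n + m + 1) ≤
      ∑ α : Fin n → ZMod 2, ∑ β : Fin m → ZMod 2, (walsh F α β) ^ 4 := by
  have hmn : m < n := by rcases hnm with ⟨_, h⟩ | ⟨_, _, h⟩ <;> exact h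
  set k := n - m with hkdef
  have hk1 : 1 ≤ k := by omega
  have hmk : m + k = n := by omega
  -- total sum identity
  have htot : (∑ α : V n, ∑ β : V m, (walsh F α β) ^ 4) = 2 ^ (n + m) * Nq F :=
    key1 F (walsh F) (walsh_pow4 F)
  -- existence of a bad direction
  have hbad : ∃ a : V n, a ≠ 0 ∧ ∃ b : V m, D F a b ≠ 2 ^ k := by
    have hnb : ¬ (∀ a : V n, a ≠ 0 → ∀ b : V m, D F a b = 2 ^ k) := by
      rcases hnm with ⟨ho, _⟩ | ⟨he, h2, _⟩
      · exact not_balanced_odd ho hm F (2 ^ k)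
      · exact not_balanced_even he hn hm h2 F (2 ^ k)
    push_neg at hnb
    obtain ⟨a, ha, b, hb⟩ := hnb
    exact ⟨a, ha, b, hb⟩
  obtain ⟨a₀, ha₀, b₀, hb₀⟩ := hbad
  -- E a₀ ≥ 8
  have hE8 : 8 ≤ ∑ b : V m, (D F a₀ b - 2 ^ k) ^ 2 := by
    set e : V m → ℤ := fun b => D F a₀ b - 2 ^ k with he
    have heven : ∀ b, 2 ∣ e b := by
      intro b
      refine dvd_sub (D_even F a₀ ha₀ b) ⟨2 ^ (k - 1), ?_⟩
      rw [← pow_succ']; congr 1; omega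
    have hsum0 : ∑ b : V m, e b = 0 := by
      simp only [he]
      rw [Finset.sum_sub_distrib, D_sum, Finset.sum_const, Finset.card_univ, card_V,
        nsmul_eq_mul]
      push_cast
      rw [← pow_add, hmk]
      ring
    have hb₀' : e b₀ ≠ 0 := sub_ne_zero.mpr hb₀
    have hb1 : ∃ b₁ : V m, b₁ ≠ b₀ ∧ e b₁ ≠ 0 := by
      by_contra hall
      push_neg at hall
      have : ∑ b : V m, e b = e b₀ :=
        Finset.sum_eq_single b₀ (fun b _ hb => hall b hb) (fun h => absurd (Finset.mem_univ _) h)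
      rw [hsum0] at this
      exact hb₀' this.symm
    obtain ⟨b₁, hb₁ne, hb₁⟩ := hb1
    have hpair : ∑ b ∈ ({b₀, b₁} : Finset (V m)), e b ^ 2 ≤ ∑ b : V m, e b ^ 2 :=
      Finset.sum_le_sum_of_subset_of_nonneg (Finset.subset_univ _)
        (fun b _ _ => sq_nonneg _)
    rw [Finset.sum_pair (Ne.symm hb₁ne)] at hpair
    have h1 := sq_ge_four_of_even_ne_zero _ (heven b₀) hb₀'
    have h2 := sq_ge_four_of_even_ne_zero _ (heven b₁) hb₁
    linarith
  -- lower bound on Nq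
  have hNq : 2 ^ (2 * n) + ((2:ℤ) ^ n - 1) * 2 ^ (n + k) + 8 ≤ Nq F := by
    rw [Nq_eq]
    rw [← Finset.add_sum_erase (univ : Finset (V n))
      (fun a => ∑ b : V m, (D F a b) ^ 2) (Finset.mem_univ 0)]
    have hlow : ∀ a ∈ (univ : Finset (V n)).erase 0,
        (2:ℤ) ^ (n + k) + (if a = a₀ then 8 else 0) ≤ ∑ b : V m, (D F a b) ^ 2 := by
      intro a ha
      rw [S_decomp F hmk a]
      by_cases haa : a = a₀
      · subst haa
        simp only [eq_self_iff_true, if_true]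
        linarith
      · simp only [if_neg haa]
        have : (0:ℤ) ≤ ∑ b : V m, (D F a b - 2 ^ k) ^ 2 :=
          Finset.sum_nonneg fun b _ => sq_nonneg _
        linarith
    have hsum := Finset.sum_le_sum hlow
    have hcardZ : (((univ : Finset (V n)).erase 0).card : ℤ) = 2 ^ n - 1 := by
      rw [Finset.card_erase_of_mem (Finset.mem_univ 0), Finset.card_univ, card_V,
        Nat.cast_sub Nat.one_le_two_pow]
      push_cast; ring
    have ha₀mem : a₀ ∈ (univ : Finset (V n)).erase 0 :=
      Finset.mem_erase.mpr ⟨ha₀, Finset.mem_univ _⟩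
    have hite : ∑ a ∈ (univ : Finset (V n)).erase 0, (if a = a₀ then (8:ℤ) else 0) = 8 := by
      rw [Finset.sum_ite_eq' ((univ : Finset (V n)).erase 0) a₀ (fun _ => (8:ℤ)),
        if_pos ha₀mem]
    rw [Finset.sum_add_distrib, Finset.sum_const, nsmul_eq_mul, hcardZ, hite] at hsum
    rw [S_zero]
    linarith
  -- final arithmetic
  rw [htot]
  have hP : (0:ℤ) < 2 ^ n := by positivity
  have hQ : (0:ℤ) < 2 ^ m := by positivity
  have hPQK : (2:ℤ) ^ m * 2 ^ k = 2 ^ n := by rw [← pow_add, hmk]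
  have e1 : (2:ℤ) ^ (4 * n) = (2 ^ n) ^ 4 := by rw [← pow_mul, mul_comm n 4]
  have e2 : (2:ℤ) ^ (3 * n) = (2 ^ n) ^ 3 := by rw [← pow_mul, mul_comm n 3]
  have e3 : (2:ℤ) ^ (n + m + 1) = 2 ^ n * 2 ^ m * 2 := by
    rw [pow_add, pow_add, pow_one]
  have e4 : (2:ℤ) ^ (n + m) = 2 ^ n * 2 ^ m := by rw [pow_add]
  have e5 : (2:ℤ) ^ (2 * n) = (2 ^ n) ^ 2 := by rw [← pow_mul, mul_comm n 2]
  have e6 : (2:ℤ) ^ (n + k) = 2 ^ n * 2 ^ k := by rw [pow_add]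
  have hmid : (2:ℤ) ^ (n + m) * (2 ^ (2 * n) + ((2:ℤ) ^ n - 1) * 2 ^ (n + k) + 8)
      ≤ 2 ^ (n + m) * Nq F := by
    apply mul_le_mul_of_nonneg_left hNq
    positivity
  refine le_trans ?_ hmid
  rw [e1, e2, e3, e4, e5, e6]
  have key : (2:ℤ) ^ n * 2 ^ m * ((2 ^ n) ^ 2 + ((2:ℤ) ^ n - 1) * (2 ^ n * 2 ^ k) + 8)
      = (2 ^ n) ^ 4 + (2 ^ n) ^ 3 * (2 ^ m - 1) + 3 * (2 ^ n * 2 ^ m * 2)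
        + 2 * (2 ^ n * 2 ^ m) := by
    linear_combination ((2:ℤ) ^ n) ^ 2 * ((2:ℤ) ^ n - 1) * hPQK
  rw [key]
  nlinarith [mul_pos hP hQ]
end
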